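/- arXiv:1711.01607 — 7 statements merged into one kernel-verified Lean document; each statement's English description precedes it below -/
import Mathlib

section
/- Let K be a compact Hausdorff space, S a semigroup of Markov operators on C(K), L ⊆ K a closed self-supporting set, and i: C(L)' → C(K)' the canonical embedding of measures given by i(μ)(f) = ∫_L f|_L dμ. Then i restricts to a bijection between the S_L-invariant probability measures on L and the S-invariant probability measures on K whose support is contained in L. -/
open MeasureTheory Filter
open scoped NNReal ENNReal Classical Topology

noncomputable def sotEnd (K : Type) [TopologicalSpace K] [CompactSpace K] :
    TopologicalSpace (Module.End ℝ C(K, ℝ)) :=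
  TopologicalSpace.induced (fun T => (⇑T : C(K, ℝ) → C(K, ℝ))) inferInstance

/-- A Markov operator on `C(K, ℝ)`: positive and unital. -/
def IsMarkov {K : Type} [TopologicalSpace K] [CompactSpace K]
    (T : Module.End ℝ C(K, ℝ)) : Prop :=
  (∀ f : C(K, ℝ), 0 ≤ f → 0 ≤ T f) ∧ T 1 = 1

/-- Right amenability of a semigroup of operators on `C(K, ℝ)`, endowed with the
strong operator topology: there is a positive normalized right invariant mean on the
bounded continuous functions on the semigroup. -/
def RightAmenable {K : Type} [TopologicalSpace K] [CompactSpace K]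
    (𝒮 : Subsemigroup (Module.End ℝ C(K, ℝ))) : Prop :=
  letI : TopologicalSpace (Module.End ℝ C(K, ℝ)) := sotEnd K
  ∃ m : BoundedContinuousFunction ↥𝒮 ℝ →ₗ[ℝ] ℝ,
    (∀ f : BoundedContinuousFunction ↥𝒮 ℝ, 0 ≤ f → 0 ≤ m f) ∧
    m 1 = 1 ∧
    ∀ (f g : BoundedContinuousFunction ↥𝒮 ℝ) (S : ↥𝒮),
      (∀ T : ↥𝒮, g T = f (T * S)) → m g = m f

/-- `μ` is invariant under the semigroup `𝒮`, i.e. `S'μ = μ` for all `S ∈ 𝒮`. -/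
def IsInvariantM {K : Type} [TopologicalSpace K] [CompactSpace K] [MeasurableSpace K]
    (𝒮 : Set (Module.End ℝ C(K, ℝ))) (μ : Measure K) : Prop :=
  ∀ T ∈ 𝒮, ∀ f : C(K, ℝ), ∫ x, (T f) x ∂μ = ∫ x, f x ∂μ

/-- `μ` belongs to `P_𝒮(K)`: an `𝒮`-invariant regular Borel probability measure. -/
def InvProb {K : Type} [TopologicalSpace K] [CompactSpace K] [MeasurableSpace K]
    (𝒮 : Set (Module.End ℝ C(K, ℝ))) (μ : Measure K) : Prop :=
  IsProbabilityMeasure μ ∧ μ.Regular ∧ IsInvariantM 𝒮 μ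

/-- `μ` is an ergodic measure for `𝒮`: an extreme point of `P_𝒮(K)`. -/
def IsErgodicM {K : Type} [TopologicalSpace K] [CompactSpace K] [MeasurableSpace K]
    (𝒮 : Set (Module.End ℝ C(K, ℝ))) (μ : Measure K) : Prop :=
  InvProb 𝒮 μ ∧
    ∀ μ₁ μ₂ : Measure K, InvProb 𝒮 μ₁ → InvProb 𝒮 μ₂ →
      ∀ t : ℝ≥0, 0 < t → t < 1 → μ = t • μ₁ + (1 - t) • μ₂ → μ₁ = μ₂

/-- The absolute kernel `I_μ = {f : ∫ |f| dμ = 0}` of a measure. -/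
def absKernel {K : Type} [TopologicalSpace K] [CompactSpace K] [MeasurableSpace K]
    (μ : Measure K) : Set C(K, ℝ) :=
  {f : C(K, ℝ) | ∫ x, |f x| ∂μ = 0}

/-- A primitive `𝒮`-ideal: the absolute kernel of an ergodic invariant measure. -/
def IsPrimitive {K : Type} [TopologicalSpace K] [CompactSpace K] [MeasurableSpace K]
    (𝒮 : Set (Module.End ℝ C(K, ℝ))) (p : Set C(K, ℝ)) : Prop :=
  ∃ μ : Measure K, IsErgodicM 𝒮 μ ∧ p = absKernel μ

/-- An `𝒮`-ideal: a closed proper `𝒮`-invariant (lattice) ideal of `C(K, ℝ)`. -/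
def IsSIdeal {K : Type} [TopologicalSpace K] [CompactSpace K]
    (𝒮 : Set (Module.End ℝ C(K, ℝ))) (I : Set C(K, ℝ)) : Prop :=
  IsClosed I ∧ I ≠ Set.univ ∧ (0 : C(K, ℝ)) ∈ I ∧
    (∀ f ∈ I, ∀ g ∈ I, f + g ∈ I) ∧
    (∀ c : ℝ, ∀ f ∈ I, c • f ∈ I) ∧
    (∀ f ∈ I, ∀ g : C(K, ℝ), |g| ≤ |f| → g ∈ I) ∧
    (∀ T ∈ 𝒮, ∀ f ∈ I, T f ∈ I)

/-- A self-supporting set: `supp (S'δ_x) ⊆ L` for all `x ∈ L`, `S ∈ 𝒮`. -/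
def SelfSupporting {K : Type} [TopologicalSpace K] [CompactSpace K]
    (𝒮 : Set (Module.End ℝ C(K, ℝ))) (L : Set K) : Prop :=
  L.Nonempty ∧ IsClosed L ∧
    ∀ T ∈ 𝒮, ∀ x ∈ L, ∀ f : C(K, ℝ), (∀ y ∈ L, f y = 0) → T f x = 0


set_option linter.unusedSectionVars false
section AuxReg
variable {K : Type} [TopologicalSpace K] [CompactSpace K] [T2Space K]
    [MeasurableSpace K] [BorelSpace K]

lemma regular_map_subtype {L : Set K} (hLc : IsClosed L)
    (ν : Measure ↥L) [IsFiniteMeasure ν] [ν.Regular] :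
    (ν.map (Subtype.val : ↥L → K)).Regular := by
  have hLm : MeasurableSet L := hLc.measurableSet
  haveI : CompactSpace ↥L := isCompact_iff_compactSpace.mp hLc.isCompact
  have hmap : ∀ s : Set K, MeasurableSet s →
      ν.map Subtype.val s = ν (Subtype.val ⁻¹' s) :=
    fun s hs => Measure.map_apply measurable_subtype_coe hs
  haveI : IsFiniteMeasure (ν.map Subtype.val) :=
    ⟨by rw [hmap _ MeasurableSet.univ]; exact measure_lt_top ν _⟩
  refine { outerRegular := ?_, innerRegular := ?_ }
  · intro A hA r hr
    rw [hmap _ hA] at hr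
    obtain ⟨V, hAV, hVopen, hVr⟩ :=
      (Subtype.val ⁻¹' A).exists_isOpen_lt_of_lt r hr
    obtain ⟨U, hUopen, hUV⟩ := isOpen_induced_iff.mp hVopen
    refine ⟨U ∪ Lᶜ, ?_, hUopen.union hLc.isOpen_compl, ?_⟩
    · intro x hx
      by_cases hxL : x ∈ L
      · have : (⟨x, hxL⟩ : ↥L) ∈ V := hAV hx
        rw [← hUV] at this
        exact Or.inl this
      · exact Or.inr hxL
    · rw [hmap _ ((hUopen.union hLc.isOpen_compl).measurableSet)]
      have hpre : (Subtype.val : ↥L → K) ⁻¹' (U ∪ Lᶜ) = V := by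
        rw [Set.preimage_union, ← hUV]
        have : (Subtype.val : ↥L → K) ⁻¹' Lᶜ = ∅ := by
          ext x; simp [x.2]
        rw [this, Set.union_empty]
      rw [hpre]; exact hVr
  · intro U hU r hr
    rw [hmap _ hU.measurableSet] at hr
    obtain ⟨C, hCU, hCcomp, hCr⟩ :=
      Measure.Regular.innerRegular (hU.preimage continuous_subtype_val) r hr
    refine ⟨Subtype.val '' C, Set.image_subset_iff.mpr hCU,
      hCcomp.image continuous_subtype_val, ?_⟩
    rw [hmap _ (hCcomp.image continuous_subtype_val).isClosed.measurableSet,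
      Set.preimage_image_eq _ Subtype.val_injective]
    exact hCr

lemma regular_comap_subtype {L : Set K} (hLc : IsClosed L)
    (m : Measure K) [IsFiniteMeasure m] [m.Regular] :
    (m.comap (Subtype.val : ↥L → K)).Regular := by
  have hLm : MeasurableSet L := hLc.measurableSet
  haveI : CompactSpace ↥L := isCompact_iff_compactSpace.mp hLc.isCompact
  have me : MeasurableEmbedding (Subtype.val : ↥L → K) :=
    MeasurableEmbedding.subtype_coe hLm
  have hcomap : ∀ s : Set ↥L, m.comap Subtype.val s = m (Subtype.val '' s) :=
    fun s => me.comap_apply m s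
  haveI : IsFiniteMeasure (m.comap (Subtype.val : ↥L → K)) :=
    ⟨by rw [hcomap]; exact measure_lt_top m _⟩
  haveI : m.InnerRegular := by infer_instance
  refine { outerRegular := ?_, innerRegular := ?_ }
  · intro A hA r hr
    rw [hcomap] at hr
    obtain ⟨U, hsub, hUopen, hUr⟩ :=
      (Subtype.val '' A).exists_isOpen_lt_of_lt r hr
    refine ⟨Subtype.val ⁻¹' U, fun x hx => hsub ⟨x, hx, rfl⟩,
      hUopen.preimage continuous_subtype_val, ?_⟩
    rw [hcomap]
    exact lt_of_le_of_lt (measure_mono (Set.image_preimage_subset _ _)) hUr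
  · intro U hU r hr
    rw [hcomap] at hr
    have hUm : MeasurableSet (Subtype.val '' U) :=
      me.measurableSet_image' hU.measurableSet
    obtain ⟨C, hCsub, hCcomp, hCr⟩ := Measure.InnerRegular.innerRegular hUm r hr
    have hCL : C ⊆ L := hCsub.trans (by
      rintro y ⟨x, _, rfl⟩; exact x.2)
    refine ⟨Subtype.val ⁻¹' C, ?_, ?_, ?_⟩
    · intro x hx
      obtain ⟨y, hyU, hyx⟩ := hCsub hx
      rwa [← Subtype.val_injective hyx]
    · exact (hCcomp.isClosed.preimage continuous_subtype_val).isCompact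
    · rw [hcomap, Set.image_preimage_eq_inter_range, Subtype.range_coe,
        Set.inter_eq_self_of_subset_left hCL]
      exact hCr
end AuxReg

/-- For a self-supporting closed set `L`, pushforward along the inclusion `L → K` is a
bijection between the `𝒮_L`-invariant probability measures on `L` and the `𝒮`-invariant
probability measures on `K` supported in `L`. -/
theorem stmt4 {K : Type} [TopologicalSpace K] [CompactSpace K] [T2Space K]
    [MeasurableSpace K] [BorelSpace K]
    (𝒮 : Subsemigroup (Module.End ℝ C(K, ℝ))) (hMarkov : ∀ T ∈ 𝒮, IsMarkov T)
    (L : Set K) (hL : SelfSupporting (𝒮 : Set (Module.End ℝ C(K, ℝ))) L) :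
    Set.BijOn (fun ν : Measure ↥L => ν.map (Subtype.val : ↥L → K))
      {ν : Measure ↥L | IsProbabilityMeasure ν ∧ ν.Regular ∧
        ∀ T ∈ 𝒮, ∀ F : C(K, ℝ), ∫ x : ↥L, (T F) ↑x ∂ν = ∫ x : ↥L, F ↑x ∂ν}
      {m : Measure K | InvProb (𝒮 : Set (Module.End ℝ C(K, ℝ))) m ∧ m Lᶜ = 0} := by
  obtain ⟨hLne, hLc, hss⟩ := hL
  have hLm : MeasurableSet L := hLc.measurableSet
  have me : MeasurableEmbedding (Subtype.val : ↥L → K) :=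
    MeasurableEmbedding.subtype_coe hLm
  have hint : ∀ (ν : Measure ↥L) (G : C(K, ℝ)),
      ∫ x, G x ∂(ν.map Subtype.val) = ∫ x : ↥L, G ↑x ∂ν := fun ν G =>
    integral_map measurable_subtype_coe.aemeasurable
      G.continuous.aestronglyMeasurable
  refine ⟨?_, ?_, ?_⟩
  · rintro ν ⟨hprob, hreg, hinv⟩
    haveI := hprob; haveI := hreg
    refine ⟨⟨?_, ?_, ?_⟩, ?_⟩
    · exact Measure.isProbabilityMeasure_map measurable_subtype_coe.aemeasurable
    · exact regular_map_subtype hLc ν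
    · intro T hT F
      rw [hint, hint]; exact hinv T hT F
    · rw [Measure.map_apply measurable_subtype_coe hLm.compl]
      have : (Subtype.val : ↥L → K) ⁻¹' Lᶜ = ∅ := by ext x; simp [x.2]
      rw [this, measure_empty]
  · intro ν₁ _ ν₂ _ heq
    have := congrArg (Measure.comap (Subtype.val : ↥L → K)) heq
    simpa [me.comap_map] using this
  · rintro m ⟨⟨hprob, hreg, hinv⟩, hsupp⟩
    haveI := hprob; haveI := hreg
    have hmc : (m.comap (Subtype.val : ↥L → K)).map Subtype.val = m := by
      rw [me.map_comap, Subtype.range_coe,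
        Measure.restrict_eq_self_of_ae_mem (ae_iff.mpr (by exact hsupp))]
    have hL1 : m L = 1 := by
      have h := measure_add_measure_compl (μ := m) hLm
      rwa [hsupp, add_zero, measure_univ] at h
    have hintc : ∀ G : C(K, ℝ),
        ∫ x : ↥L, G ↑x ∂(m.comap Subtype.val) = ∫ x, G x ∂m := by
      intro G
      rw [← hint (m.comap Subtype.val) G, hmc]
    refine ⟨m.comap Subtype.val, ⟨?_, ?_, ?_⟩, hmc⟩
    · refine ⟨?_⟩
      rw [me.comap_apply, Set.image_univ, Subtype.range_coe]
      exact hL1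
    · exact regular_comap_subtype hLc m
    · intro T hT F
      rw [hintc, hintc]; exact hinv T hT F
end

section
/- Let K be a compact Hausdorff space, S a semigroup of Markov operators on C(K), L ⊆ K a closed self-supporting set, and i the canonical embedding of measures on L into measures on K. If μ is an extreme point of the invariant probability measures P_{S_L}(L), then i(μ) is an extreme point of P_S(K). -/
open MeasureTheory Filter
open scoped NNReal ENNReal Classical Topology

section Aux

variable {α β : Type*} [TopologicalSpace α] [MeasurableSpace α] [BorelSpace α]
  [TopologicalSpace β] [MeasurableSpace β] [BorelSpace β]

/-- Regularity transfers to the comap along a closed embedding, provided the measure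
vanishes outside the range. -/
lemma regular_comap_of_isClosedEmbedding {e : α → β} (he : Topology.IsClosedEmbedding e)
    (μ : MeasureTheory.Measure β) [μ.Regular] (h0 : μ (Set.range e)ᶜ = 0) :
    (μ.comap e).Regular := by
  have hme : MeasurableEmbedding e := he.measurableEmbedding
  have key : ∀ s : Set β, μ (s ∩ Set.range e) = μ s := by
    intro s
    refine le_antisymm (measure_mono Set.inter_subset_left) ?_
    calc μ s ≤ μ (s ∩ Set.range e) + μ (s ∩ (Set.range e)ᶜ) := by
          rw [← MeasureTheory.measure_inter_add_diff s hme.measurableSet_range, Set.diff_eq]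
      _ ≤ μ (s ∩ Set.range e) + 0 := by
          gcongr
          exact le_of_eq (measure_mono_null Set.inter_subset_right h0)
      _ = μ (s ∩ Set.range e) := add_zero _
  haveI : MeasureTheory.IsFiniteMeasureOnCompacts (μ.comap e) := by
    constructor
    intro C hC
    rw [hme.comap_apply]
    exact (hC.image he.continuous).measure_lt_top
  haveI : (μ.comap e).OuterRegular := by
    constructor
    intro A hA r hr
    rw [hme.comap_apply] at hr
    obtain ⟨V, hAV, hVopen, hVr⟩ :=
      MeasureTheory.Measure.OuterRegular.outerRegular (hme.measurableSet_image' hA) r hr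
    refine ⟨e ⁻¹' V, fun x hx => hAV (Set.mem_image_of_mem e hx),
      hVopen.preimage he.continuous, ?_⟩
    rw [hme.comap_apply]
    exact lt_of_le_of_lt (measure_mono (Set.image_preimage_subset e V)) hVr
  refine ⟨?_⟩
  intro U hU r hr
  rw [hme.comap_apply] at hr
  obtain ⟨V, hVopen, hVU⟩ := he.toIsEmbedding.isOpen_iff.mp hU
  have himg : e '' U = V ∩ Set.range e := by
    rw [← hVU, Set.image_preimage_eq_inter_range]
  rw [himg, key] at hr
  obtain ⟨C, hCV, hCcomp, hCr⟩ :=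
    MeasureTheory.Measure.Regular.innerRegular hVopen r hr
  refine ⟨e ⁻¹' C, ?_, he.isProperMap.isCompact_preimage hCcomp, ?_⟩
  · intro x hx
    rw [← hVU]; exact hCV hx
  · rw [hme.comap_apply, Set.image_preimage_eq_inter_range, key]
    exact hCr

/-- Regularity transfers to the pushforward along a closed embedding into a Hausdorff
space. -/
lemma regular_map_of_isClosedEmbedding [T2Space β] {e : α → β}
    (he : Topology.IsClosedEmbedding e) (ν : MeasureTheory.Measure α) [ν.Regular] :
    (ν.map e).Regular := by
  have hme : MeasurableEmbedding e := he.measurableEmbedding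
  have h0 : (ν.map e) (Set.range e)ᶜ = 0 := by
    rw [hme.map_apply]
    convert measure_empty (μ := ν)
    ext x; simp
  haveI : MeasureTheory.IsFiniteMeasureOnCompacts (ν.map e) := by
    constructor
    intro C hC
    rw [hme.map_apply]
    exact (he.isProperMap.isCompact_preimage hC).measure_lt_top
  haveI : (ν.map e).OuterRegular := by
    constructor
    intro A hA r hr
    rw [hme.map_apply] at hr
    obtain ⟨U, hAU, hUopen, hUr⟩ :=
      MeasureTheory.Measure.OuterRegular.outerRegular (hme.measurable hA) r hr
    obtain ⟨V, hVopen, hVU⟩ := he.toIsEmbedding.isOpen_iff.mp hUopen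
    refine ⟨V ∪ (Set.range e)ᶜ, ?_, hVopen.union he.isClosed_range.isOpen_compl, ?_⟩
    · intro x hx
      by_cases hxr : x ∈ Set.range e
      · obtain ⟨y, rfl⟩ := hxr
        rw [← hVU] at hAU
        exact Or.inl (hAU hx)
      · exact Or.inr hxr
    · calc (ν.map e) (V ∪ (Set.range e)ᶜ)
          ≤ (ν.map e) V + (ν.map e) (Set.range e)ᶜ := measure_union_le _ _
        _ = (ν.map e) V := by rw [h0, add_zero]
        _ = ν (e ⁻¹' V) := hme.map_apply _ _
        _ = ν U := by rw [hVU]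
        _ < r := hUr
  refine ⟨?_⟩
  intro W hW r hr
  rw [hme.map_apply] at hr
  obtain ⟨C, hCW, hCcomp, hCr⟩ :=
    MeasureTheory.Measure.Regular.innerRegular (hW.preimage he.continuous) r hr
  refine ⟨e '' C, ?_, hCcomp.image he.continuous, ?_⟩
  · rintro x ⟨y, hy, rfl⟩
    exact hCW hy
  · rwa [hme.map_apply, Set.preimage_image_eq _ hme.injective]

end Aux

/-- If `ν` is an extreme point of the invariant probability measures of the induced
semigroup on a self-supporting set `L`, then its pushforward `i(ν)` is an extreme point
of `P_𝒮(K)`. -/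
theorem stmt5 {K : Type} [TopologicalSpace K] [CompactSpace K] [T2Space K]
    [MeasurableSpace K] [BorelSpace K]
    (𝒮 : Subsemigroup (Module.End ℝ C(K, ℝ))) (hMarkov : ∀ T ∈ 𝒮, IsMarkov T)
    (L : Set K) (hL : SelfSupporting (𝒮 : Set (Module.End ℝ C(K, ℝ))) L)
    (ν : Measure ↥L)
    (hν : IsProbabilityMeasure ν ∧ ν.Regular ∧
      ∀ T ∈ 𝒮, ∀ F : C(K, ℝ), ∫ x : ↥L, (T F) ↑x ∂ν = ∫ x : ↥L, F ↑x ∂ν)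
    (hext : ∀ ν₁ ν₂ : Measure ↥L,
      (IsProbabilityMeasure ν₁ ∧ ν₁.Regular ∧
        ∀ T ∈ 𝒮, ∀ F : C(K, ℝ), ∫ x : ↥L, (T F) ↑x ∂ν₁ = ∫ x : ↥L, F ↑x ∂ν₁) →
      (IsProbabilityMeasure ν₂ ∧ ν₂.Regular ∧
        ∀ T ∈ 𝒮, ∀ F : C(K, ℝ), ∫ x : ↥L, (T F) ↑x ∂ν₂ = ∫ x : ↥L, F ↑x ∂ν₂) →
      ∀ t : ℝ≥0, 0 < t → t < 1 → ν = t • ν₁ + (1 - t) • ν₂ → ν₁ = ν₂) :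
    IsErgodicM (𝒮 : Set (Module.End ℝ C(K, ℝ))) (ν.map (Subtype.val : ↥L → K)) := by
  obtain ⟨hLne, hLclosed, -⟩ := hL
  obtain ⟨hνprob, hνreg, hνinv⟩ := hν
  have hemb : Topology.IsClosedEmbedding (Subtype.val : ↥L → K) :=
    hLclosed.isClosedEmbedding_subtypeVal
  have hme : MeasurableEmbedding (Subtype.val : ↥L → K) := hemb.measurableEmbedding
  have hrange : Set.range (Subtype.val : ↥L → K) = L := Subtype.range_coe
  set μ := ν.map (Subtype.val : ↥L → K) with hμdef
  have hμLc : μ Lᶜ = 0 := by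
    rw [hμdef, hme.map_apply]
    convert measure_empty (μ := ν)
    ext x
    simp [x.2]
  have hint : ∀ f : C(K, ℝ), ∫ x, f x ∂μ = ∫ x : ↥L, f ↑x ∂ν := by
    intro f
    rw [hμdef, integral_map hme.measurable.aemeasurable]
    exact f.continuous.measurable.stronglyMeasurable.aestronglyMeasurable
  have hμprob : IsProbabilityMeasure μ :=
    Measure.isProbabilityMeasure_map hme.measurable.aemeasurable
  have hμreg : μ.Regular := regular_map_of_isClosedEmbedding hemb ν
  refine ⟨⟨hμprob, hμreg, ?_⟩, ?_⟩
  · intro T hT f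
    rw [hint, hint]
    exact hνinv T hT f
  · intro μ₁ μ₂ h₁ h₂ t ht0 ht1 hsum
    have ht0' : (t : ℝ≥0∞) ≠ 0 := by exact_mod_cast ht0.ne'
    have ht1' : ((1 - t : ℝ≥0) : ℝ≥0∞) ≠ 0 := by
      have : (0 : ℝ≥0) < 1 - t := tsub_pos_of_lt ht1
      exact_mod_cast this.ne'
    have hzero : (t : ℝ≥0∞) * μ₁ Lᶜ + ((1 - t : ℝ≥0) : ℝ≥0∞) * μ₂ Lᶜ = 0 := by
      have := congrArg (fun m : Measure K => m Lᶜ) hsum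
      simp only [Measure.coe_add, Pi.add_apply, Measure.coe_smul, Pi.smul_apply,
        ENNReal.smul_def, smul_eq_mul] at this
      rw [hμLc] at this
      exact this.symm
    obtain ⟨hz1, hz2⟩ := add_eq_zero.mp hzero
    have h₁Lc : μ₁ Lᶜ = 0 := (mul_eq_zero.mp hz1).resolve_left ht0'
    have h₂Lc : μ₂ Lᶜ = 0 := (mul_eq_zero.mp hz2).resolve_left ht1'
    set ν₁ := μ₁.comap (Subtype.val : ↥L → K) with hν₁def
    set ν₂ := μ₂.comap (Subtype.val : ↥L → K) with hν₂def
    have hmap₁ : ν₁.map (Subtype.val : ↥L → K) = μ₁ := by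
      rw [hν₁def, hme.map_comap, hrange]
      exact Measure.restrict_eq_self_of_ae_mem (by
        rw [MeasureTheory.ae_iff]
        exact h₁Lc)
    have hmap₂ : ν₂.map (Subtype.val : ↥L → K) = μ₂ := by
      rw [hν₂def, hme.map_comap, hrange]
      exact Measure.restrict_eq_self_of_ae_mem (by
        rw [MeasureTheory.ae_iff]
        exact h₂Lc)
    have hprob₁ : IsProbabilityMeasure ν₁ := by
      constructor
      have := hme.map_apply ν₁ Set.univ
      rw [hmap₁, Set.preimage_univ] at this
      rw [← this]
      exact h₁.1.measure_univ
    have hprob₂ : IsProbabilityMeasure ν₂ := by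
      constructor
      have := hme.map_apply ν₂ Set.univ
      rw [hmap₂, Set.preimage_univ] at this
      rw [← this]
      exact h₂.1.measure_univ
    have hreg₁ : ν₁.Regular := by
      have := h₁.2.1
      exact regular_comap_of_isClosedEmbedding hemb μ₁ (by rwa [hrange])
    have hreg₂ : ν₂.Regular := by
      have := h₂.2.1
      exact regular_comap_of_isClosedEmbedding hemb μ₂ (by rwa [hrange])
    have hint₁ : ∀ f : C(K, ℝ), ∫ x : ↥L, f ↑x ∂ν₁ = ∫ x, f x ∂μ₁ := by
      intro f
      rw [← hmap₁, integral_map hme.measurable.aemeasurable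
        f.continuous.measurable.stronglyMeasurable.aestronglyMeasurable]
    have hint₂ : ∀ f : C(K, ℝ), ∫ x : ↥L, f ↑x ∂ν₂ = ∫ x, f x ∂μ₂ := by
      intro f
      rw [← hmap₂, integral_map hme.measurable.aemeasurable
        f.continuous.measurable.stronglyMeasurable.aestronglyMeasurable]
    have hinv₁ : ∀ T ∈ 𝒮, ∀ F : C(K, ℝ),
        ∫ x : ↥L, (T F) ↑x ∂ν₁ = ∫ x : ↥L, F ↑x ∂ν₁ := by
      intro T hT F
      rw [hint₁, hint₁]
      exact h₁.2.2 T hT F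
    have hinv₂ : ∀ T ∈ 𝒮, ∀ F : C(K, ℝ),
        ∫ x : ↥L, (T F) ↑x ∂ν₂ = ∫ x : ↥L, F ↑x ∂ν₂ := by
      intro T hT F
      rw [hint₂, hint₂]
      exact h₂.2.2 T hT F
    have hsum' : ν = t • ν₁ + (1 - t) • ν₂ := by
      have hmapinj : Function.Injective
          (Measure.map (Subtype.val : ↥L → K) : Measure ↥L → Measure K) := by
        intro a b hab
        rw [← hme.comap_map a, ← hme.comap_map b, hab]
      apply hmapinj
      rw [Measure.map_add _ _ hme.measurable, Measure.map_smul, Measure.map_smul,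
        hmap₁, hmap₂, ← hsum]
    have hfin := hext ν₁ ν₂ ⟨hprob₁, hreg₁, hinv₁⟩ ⟨hprob₂, hreg₂, hinv₂⟩ t ht0 ht1 hsum'
    rw [← hmap₁, ← hmap₂, hfin]
end

section
/- Let K be a compact metrizable space, S a right amenable semigroup of Markov operators on C(K), and I a radical S-ideal, i.e., I equals the intersection of all absolute kernels I_μ of ergodic S-invariant measures μ containing I. Then there exists an S-invariant probability measure ν with I = I_ν. -/
open MeasureTheory Filter
open scoped NNReal ENNReal Classical Topology

section Aux
variable {K : Type} [TopologicalSpace K] [CompactSpace K] [MeasurableSpace K] [OpensMeasurableSpace K]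

lemma contMap_integrable (μ : Measure K) [IsFiniteMeasure μ] (f : C(K, ℝ)) :
    Integrable (fun x => f x) μ :=
  (map_continuous f).integrable_of_hasCompactSupport ((isClosed_tsupport _).isCompact)

lemma contMap_abs_integrable (μ : Measure K) [IsFiniteMeasure μ] (f : C(K, ℝ)) :
    Integrable (fun x => |f x|) μ :=
  (contMap_integrable μ f).abs

lemma absKernel_iff_ae (μ : Measure K) [IsFiniteMeasure μ] (f : C(K, ℝ)) :
    (∫ x, |f x| ∂μ = 0) ↔ (fun x => f x) =ᵐ[μ] 0 := by
  rw [integral_eq_zero_iff_of_nonneg_ae (Eventually.of_forall fun x => abs_nonneg _)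
    (contMap_abs_integrable μ f)]
  constructor
  · intro h; filter_upwards [h] with x hx
    simpa [abs_eq_zero] using hx
  · intro h; filter_upwards [h] with x hx
    simp only [Pi.zero_apply] at hx ⊢; simp [hx]

lemma integral_abs_le (μ : Measure K) [IsProbabilityMeasure μ] (f g : C(K, ℝ)) :
    ∫ x, |f x| ∂μ ≤ (∫ x, |g x| ∂μ) + dist f g := by
  have h1 : ∀ x, |f x| ≤ |g x| + dist f g := by
    intro x
    calc |f x| = |g x + (f x - g x)| := by ring_nf
    _ ≤ |g x| + |f x - g x| := abs_add_le _ _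
    _ ≤ |g x| + dist f g := by
        have := ContinuousMap.dist_apply_le_dist (f := f) (g := g) x
        rw [Real.dist_eq] at this; linarith
  calc ∫ x, |f x| ∂μ ≤ ∫ x, (|g x| + dist f g) ∂μ := by
        apply integral_mono (contMap_abs_integrable μ f)
          ((contMap_abs_integrable μ g).add (integrable_const _)) h1
  _ = (∫ x, |g x| ∂μ) + dist f g := by
        rw [integral_add (contMap_abs_integrable μ g) (integrable_const _), integral_const]
        simp

end Aux

/-- On a compact metrizable space, every radical `𝒮`-ideal is the absolute kernel of a
single invariant probability measure. -/
theorem stmt8 {K : Type} [TopologicalSpace K] [CompactSpace K] [T2Space K]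
    [TopologicalSpace.MetrizableSpace K] [MeasurableSpace K] [BorelSpace K]
    (𝒮 : Subsemigroup (Module.End ℝ C(K, ℝ))) (hMarkov : ∀ T ∈ 𝒮, IsMarkov T)
    (ham : RightAmenable 𝒮)
    (I : Set C(K, ℝ)) (hI : IsSIdeal (𝒮 : Set (Module.End ℝ C(K, ℝ))) I)
    (hrad : I = ⋂ μ ∈ {μ : Measure K |
        IsErgodicM (𝒮 : Set (Module.End ℝ C(K, ℝ))) μ ∧ I ⊆ absKernel μ},
      absKernel μ) :
    ∃ ν : Measure K, InvProb (𝒮 : Set (Module.End ℝ C(K, ℝ))) ν ∧ I = absKernel ν := by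
  classical
  -- the set of ergodic measures whose kernel contains I is nonempty
  have hEne : ∃ μ : Measure K, IsErgodicM (𝒮 : Set (Module.End ℝ C(K, ℝ))) μ ∧ I ⊆ absKernel μ := by
    by_contra h
    push_neg at h
    apply hI.2.1
    rw [hrad]
    apply Set.eq_univ_of_forall
    intro f
    rw [Set.mem_iInter₂]
    intro μ hμ
    exact absurd hμ.2 (fun h2 => (h μ hμ.1 h2))
  obtain ⟨μ₀, hμ₀⟩ := hEne
  haveI : IsProbabilityMeasure μ₀ := hμ₀.1.1.1
  -- dense sequence in C(K, ℝ)
  let D : ℕ → C(K, ℝ) := TopologicalSpace.denseSeq C(K, ℝ)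
  have hD : DenseRange D := TopologicalSpace.denseRange_denseSeq _
  -- the choice of measures
  let P : ℕ × ℕ → Prop := fun p =>
    ∃ μ : Measure K, (IsErgodicM (𝒮 : Set (Module.End ℝ C(K, ℝ))) μ ∧ I ⊆ absKernel μ) ∧
      (1 : ℝ) / (p.2 + 1) < ∫ x, |D p.1 x| ∂μ
  let c : ℕ × ℕ → Measure K := fun p => if h : P p then h.choose else μ₀
  have hcE : ∀ p, IsErgodicM (𝒮 : Set (Module.End ℝ C(K, ℝ))) (c p) ∧ I ⊆ absKernel (c p) := by
    intro p
    by_cases h : P p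
    · simp only [c, dif_pos h]; exact h.choose_spec.1
    · simp only [c, dif_neg h]; exact hμ₀
  have hcP : ∀ p, P p → (1 : ℝ) / (p.2 + 1) < ∫ x, |D p.1 x| ∂(c p) := by
    intro p h
    simp only [c, dif_pos h]
    exact h.choose_spec.2
  haveI hprob : ∀ p, IsProbabilityMeasure (c p) := fun p => (hcE p).1.1.1
  let μs : ℕ → Measure K := fun n => c (Denumerable.ofNat (ℕ × ℕ) n)
  haveI : ∀ n, IsProbabilityMeasure (μs n) := fun n => hprob _
  let w : ℕ → ℝ≥0∞ := fun n => (2 : ℝ≥0∞)⁻¹ ^ (n + 1)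
  have hw0 : ∀ n, w n ≠ 0 := by
    intro n
    simp [w, pow_ne_zero]
  have hwsum : ∑' n, w n = 1 := by
    have : ∑' n, w n = (∑' n, (2 : ℝ≥0∞)⁻¹ ^ n) * 2⁻¹ := by
      simp only [w, pow_succ]
      exact ENNReal.tsum_mul_right
    rw [this, ENNReal.tsum_geometric, ENNReal.one_sub_inv_two, inv_inv]
    exact ENNReal.mul_inv_cancel (by norm_num) (by norm_num)
  let ν : Measure K := Measure.sum (fun n => w n • μs n)
  haveI hνprob : IsProbabilityMeasure ν := by
    constructor
    rw [Measure.sum_apply _ MeasurableSet.univ]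
    simp only [Measure.smul_apply, smul_eq_mul, measure_univ, mul_one]
    exact hwsum
  -- ae characterization
  have hae : ∀ f : C(K, ℝ), ((fun x => f x) =ᵐ[ν] 0) ↔ ∀ n, (fun x => f x) =ᵐ[μs n] 0 := by
    intro f
    have h1 : ae ν = ⨆ n, ae (w n • μs n) := Measure.ae_sum_eq _
    constructor
    · intro h n
      rw [← Measure.ae_ennreal_smul_measure_eq (hw0 n) (μs n)]
      exact h.filter_mono (le_iSup (fun n => ae (w n • μs n)) n |>.trans_eq h1.symm)
    · intro h
      unfold Filter.EventuallyEq Filter.Eventually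
      rw [h1, mem_iSup]
      intro n
      rw [Measure.ae_ennreal_smul_measure_eq (hw0 n)]
      exact h n
  -- kernels of ν
  have hker : ∀ f : C(K, ℝ), f ∈ absKernel ν ↔ ∀ n, ∫ x, |f x| ∂(μs n) = 0 := by
    intro f
    rw [absKernel, Set.mem_setOf_eq, absKernel_iff_ae, hae]
    exact forall_congr' fun n => (absKernel_iff_ae (μs n) f).symm
  refine ⟨ν, ⟨inferInstance, inferInstance, ?_⟩, ?_⟩
  · -- invariance
    intro T hT f
    have key : ∀ g : C(K, ℝ), ∫ x, g x ∂ν = ∑' n, (w n).toReal * ∫ x, g x ∂(μs n) := by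
      intro g
      rw [integral_sum_measure (contMap_integrable ν g)]
      congr 1
      funext n
      rw [integral_smul_measure]
      rfl
    rw [key (T f), key f]
    congr 1
    funext n
    rw [(hcE _).1.1.2.2 T hT f]
  · -- I = absKernel ν
    apply Set.eq_of_subset_of_subset
    · intro f hf
      rw [hker]
      intro n
      exact (hcE _).2 hf
    · intro f hf
      rw [hker] at hf
      have hfc : ∀ p, ∫ x, |f x| ∂(c p) = 0 := by
        intro p
        have := hf (Encodable.encode p)
        simpa only [μs, Denumerable.ofNat_encode] using this
      rw [hrad]
      rw [Set.mem_iInter₂]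
      intro μ hμ
      haveI : IsProbabilityMeasure μ := hμ.1.1.1
      rw [absKernel, Set.mem_setOf_eq]
      by_contra hne
      have hpos : 0 < ∫ x, |f x| ∂μ :=
        lt_of_le_of_ne (integral_nonneg fun x => abs_nonneg _) (Ne.symm hne)
      set r := ∫ x, |f x| ∂μ with hr
      obtain ⟨m, hm⟩ := exists_nat_one_div_lt (show (0:ℝ) < r/2 from by linarith)
      set ε : ℝ := 1 / (m + 1) with hε
      have hε0 : 0 < ε := by positivity
      obtain ⟨n, hn⟩ := Metric.denseRange_iff.mp hD f (ε/2) (by linarith)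
      -- ∫ |D n| dμ > ε
      have h2 : r ≤ (∫ x, |(D n) x| ∂μ) + dist f (D n) := integral_abs_le μ f (D n)
      have h3 : ε < ∫ x, |(D n) x| ∂μ := by
        have : (1:ℝ)/(m+1) < r/2 := hm
        linarith
      have hP : P (n, m) := ⟨μ, hμ, by rw [hε] at h3; exact h3⟩
      have h4 : ε < ∫ x, |(D n) x| ∂(c (n, m)) := by rw [hε]; exact hcP (n, m) hP
      haveI : IsProbabilityMeasure (c (n, m)) := hprob _
      have h5 : ∫ x, |(D n) x| ∂(c (n, m)) ≤ (∫ x, |f x| ∂(c (n, m))) + dist (D n) f :=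
        integral_abs_le (c (n, m)) (D n) f
      rw [hfc (n, m)] at h5
      rw [dist_comm] at hn
      linarith
end

section
/- Let φ: K → K be continuous on a compact Hausdorff space K, T_φ the Koopman operator. For f ∈ C(K), one has ∫|f| dμ = 0 for every φ-invariant regular Borel probability measure μ if and only if lim_{N→∞} (1/N) Σ_{n=0}^{N−1} |⟨T_φ^n f, ν⟩| = 0 for every ν ∈ C(K)'. -/
open MeasureTheory Filter Topology Set
open scoped NNReal ENNReal

lemma mapClusterPt_mem_of_eventually {X : Type*} [TopologicalSpace X] {u : ℕ → X} {a : X}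
    (h : MapClusterPt a atTop u) {C : Set X} (hC : IsClosed C) (hu : ∀ᶠ n in atTop, u n ∈ C) :
    a ∈ C := by
  have h2 : ClusterPt a (𝓟 C) := h.clusterPt.mono (le_principal_iff.mpr (mem_map.mpr hu))
  simpa [hC.closure_eq] using mem_closure_iff_clusterPt.mpr h2

section Main

variable {K : Type} [TopologicalSpace K] [CompactSpace K] [T2Space K]
    [MeasurableSpace K] [BorelSpace K]

/-- Auxiliary: from an invariant positive normalized functional with `L ≤ ℓ g`, build an
invariant regular probability measure; conclude `False` from the hypothesis if `L > 0`. -/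
lemma exists_invariant_measure_aux (φ : K → K) (hφ : Continuous φ) (g : C(K, ℝ))
    (hg0 : ∀ x, 0 ≤ g x)
    (ℓ : C(K, ℝ) → ℝ)
    (hadd : ∀ h₁ h₂ : C(K, ℝ), ℓ (h₁ + h₂) = ℓ h₁ + ℓ h₂)
    (hsmul : ∀ (c : ℝ) (h : C(K, ℝ)), ℓ (c • h) = c * ℓ h)
    (hpos : ∀ h : C(K, ℝ), (∀ x, 0 ≤ h x) → 0 ≤ ℓ h)
    (hone : ℓ 1 = 1)
    (hinv : ∀ h : C(K, ℝ), ℓ (h.comp ⟨φ, hφ⟩) = ℓ h)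
    {L : ℝ} (hL : 0 < L) (hgL : L ≤ ℓ g)
    (hyp : ∀ μ : Measure K, IsProbabilityMeasure μ → μ.Regular → μ.map φ = μ →
        ∫ x, g x ∂μ = 0) : False := by
  -- monotonicity of ℓ
  have hmono : ∀ h₁ h₂ : C(K, ℝ), (∀ x, h₁ x ≤ h₂ x) → ℓ h₁ ≤ ℓ h₂ := by
    intro h₁ h₂ hle
    have h0 : 0 ≤ ℓ (h₂ - h₁) := hpos _ (fun x => by
      simp only [ContinuousMap.sub_apply, sub_nonneg]; exact hle x)
    have : ℓ h₂ = ℓ h₁ + ℓ (h₂ - h₁) := by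
      rw [← hadd]; congr 1; abel
    linarith
  -- the class of test functions for a set
  set A : Set K → Set C(K, ℝ) :=
    fun C => {h | (∀ x, 0 ≤ h x) ∧ ∀ x ∈ C, 1 ≤ h x} with hA
  set vals : Set K → Set ℝ := fun C => ℓ '' A C with hvals
  have hone_mem : ∀ C : Set K, (1 : C(K, ℝ)) ∈ A C := by
    intro C
    exact ⟨fun x => by simp, fun x _ => by simp⟩
  have hne : ∀ C : Set K, (vals C).Nonempty := fun C => ⟨ℓ 1, 1, hone_mem C, rfl⟩
  have hbb : ∀ C : Set K, BddBelow (vals C) := by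
    rintro C
    refine ⟨0, ?_⟩
    rintro r ⟨h, hh, rfl⟩
    exact hpos h hh.1
  have hsInf_nonneg : ∀ C : Set K, 0 ≤ sInf (vals C) := by
    intro C
    refine le_csInf (hne C) ?_
    rintro r ⟨h, hh, rfl⟩
    exact hpos h hh.1
  have hsInf_le_one : ∀ C : Set K, sInf (vals C) ≤ 1 := by
    intro C
    have := csInf_le (hbb C) ⟨1, hone_mem C, rfl⟩
    simpa [hone] using this
  -- the content
  set con : TopologicalSpace.Compacts K → ℝ≥0 :=
    fun C => (sInf (vals (C : Set K))).toNNReal with hcon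
  have hmono' : ∀ C₁ C₂ : TopologicalSpace.Compacts K,
      (C₁ : Set K) ⊆ C₂ → con C₁ ≤ con C₂ := by
    intro C₁ C₂ hsub
    apply Real.toNNReal_mono
    apply csInf_le_csInf (hbb _) (hne _)
    rintro r ⟨h, hh, rfl⟩
    exact ⟨h, ⟨hh.1, fun x hx => hh.2 x (hsub hx)⟩, rfl⟩
  have hsInf_union : ∀ C₁ C₂ : Set K,
      sInf (vals (C₁ ∪ C₂)) ≤ sInf (vals C₁) + sInf (vals C₂) := by
    intro C₁ C₂
    have key : ∀ r₁ ∈ vals C₁, ∀ r₂ ∈ vals C₂, sInf (vals (C₁ ∪ C₂)) ≤ r₁ + r₂ := by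
      rintro _ ⟨h₁, hh₁, rfl⟩ _ ⟨h₂, hh₂, rfl⟩
      refine csInf_le (hbb _) ⟨h₁ + h₂, ⟨?_, ?_⟩, (hadd h₁ h₂).symm ▸ rfl⟩
      · intro x; simpa using add_nonneg (hh₁.1 x) (hh₂.1 x)
      · rintro x (hx | hx)
        · simpa using le_add_of_le_of_nonneg (hh₁.2 x hx) (hh₂.1 x)
        · simpa using le_add_of_nonneg_of_le (hh₁.1 x) (hh₂.2 x hx)
    have step : ∀ r₁ ∈ vals C₁, sInf (vals (C₁ ∪ C₂)) - r₁ ≤ sInf (vals C₂) := by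
      intro r₁ hr₁
      refine le_csInf (hne _) fun r₂ hr₂ => by linarith [key r₁ hr₁ r₂ hr₂]
    have : sInf (vals (C₁ ∪ C₂)) - sInf (vals C₂) ≤ sInf (vals C₁) := by
      refine le_csInf (hne _) fun r₁ hr₁ => by linarith [step r₁ hr₁]
    linarith
  have hsup_le : ∀ C₁ C₂ : TopologicalSpace.Compacts K,
      con (C₁ ⊔ C₂) ≤ con C₁ + con C₂ := by
    intro C₁ C₂
    have h1 := hsInf_union (C₁ : Set K) C₂
    calc con (C₁ ⊔ C₂) = (sInf (vals ((C₁ : Set K) ∪ C₂))).toNNReal := by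
          simp [hcon, TopologicalSpace.Compacts.coe_sup]
      _ ≤ (sInf (vals (C₁ : Set K)) + sInf (vals (C₂ : Set K))).toNNReal :=
          Real.toNNReal_mono h1
      _ ≤ con C₁ + con C₂ := Real.toNNReal_add_le
  have hsup_disjoint : ∀ C₁ C₂ : TopologicalSpace.Compacts K,
      Disjoint (C₁ : Set K) C₂ → IsClosed (C₁ : Set K) → IsClosed (C₂ : Set K) →
      con (C₁ ⊔ C₂) = con C₁ + con C₂ := by
    intro C₁ C₂ hdis hcl₁ hcl₂
    refine le_antisymm (hsup_le C₁ C₂) ?_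
    have hge : sInf (vals (C₁ : Set K)) + sInf (vals (C₂ : Set K)) ≤
        sInf (vals ((C₁ : Set K) ∪ C₂)) := by
      refine le_csInf (hne _) ?_
      rintro _ ⟨h, ⟨hpos', hge1⟩, rfl⟩
      obtain ⟨u, hu0, hu1, huIcc⟩ :=
        exists_continuous_zero_one_of_isClosed hcl₂ hcl₁ hdis.symm
      have hmem₁ : h * u ∈ A (C₁ : Set K) := by
        constructor
        · intro x; exact mul_nonneg (hpos' x) (huIcc x).1
        · intro x hx
          have : u x = 1 := hu1 hx
          simpa [this] using hge1 x (Or.inl hx)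
      have hmem₂ : h - h * u ∈ A (C₂ : Set K) := by
        constructor
        · intro x
          have : h x * u x ≤ h x * 1 := by
            have := (huIcc x).2
            exact mul_le_mul_of_nonneg_left this (hpos' x)
          simpa using by linarith
        · intro x hx
          have : u x = 0 := hu0 hx
          simpa [this] using hge1 x (Or.inr hx)
      have e1 : ℓ (h * u) + ℓ (h - h * u) = ℓ h := by
        rw [← hadd]; congr 1; abel
      have i1 : sInf (vals (C₁ : Set K)) ≤ ℓ (h * u) := csInf_le (hbb _) ⟨_, hmem₁, rfl⟩
      have i2 : sInf (vals (C₂ : Set K)) ≤ ℓ (h - h * u) := csInf_le (hbb _) ⟨_, hmem₂, rfl⟩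
      linarith
    calc con C₁ + con C₂
        = (sInf (vals (C₁ : Set K)) + sInf (vals (C₂ : Set K))).toNNReal := by
          rw [Real.toNNReal_add (hsInf_nonneg _) (hsInf_nonneg _)]
      _ ≤ (sInf (vals ((C₁ : Set K) ∪ C₂))).toNNReal := Real.toNNReal_mono hge
      _ = con (C₁ ⊔ C₂) := by simp [hcon, TopologicalSpace.Compacts.coe_sup]
  set Con : Content K := ⟨con, hmono', hsup_disjoint, hsup_le⟩ with hCon
  set μ : Measure K := Con.measure with hμ
  have hreg : μ.Regular := Con.regular
  -- measure of open sets
  have hμopen : ∀ (U : Set K) (hU : IsOpen U),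
      μ U = Con.innerContent ⟨U, hU⟩ := by
    intro U hU
    rw [hμ, Con.measure_apply hU.measurableSet]
    exact Con.outerMeasure_opens ⟨U, hU⟩
  -- μ is a probability measure
  have hμuniv : μ univ = 1 := by
    rw [hμopen univ isOpen_univ]
    refine le_antisymm ?_ ?_
    · refine iSup_le fun C => iSup_le fun _ => ?_
      have hc1 : con C ≤ 1 := by
        have := hsInf_le_one (C : Set K)
        simpa [hcon] using Real.toNNReal_mono this
      show (con C : ℝ≥0∞) ≤ 1
      exact_mod_cast hc1
    · have hmem : ((⟨univ, isCompact_univ⟩ : TopologicalSpace.Compacts K) : Set K) ⊆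
          (⟨univ, isOpen_univ⟩ : TopologicalSpace.Opens K) := subset_rfl
      refine le_trans ?_ (Con.le_innerContent ⟨univ, isCompact_univ⟩ ⟨univ, isOpen_univ⟩ hmem)
      have h1 : sInf (vals (univ : Set K)) = 1 := by
        refine le_antisymm (hsInf_le_one _) ?_
        refine le_csInf (hne _) ?_
        rintro _ ⟨h, hh, rfl⟩
        have := hmono 1 h (fun x => by simpa using hh.2 x trivial)
        simpa [hone] using this
      have : con ⟨univ, isCompact_univ⟩ = 1 := by simp [hcon, h1]
      rw [show ∀ C, Con C = (Con.toFun C : ℝ≥0∞) from fun _ => rfl]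
      simp only [hCon]
      rw [this]
      simp
  haveI hprob : IsProbabilityMeasure μ := ⟨hμuniv⟩
  -- invariance
  have hopen_le : ∀ U : Set K, IsOpen U → μ (φ ⁻¹' U) ≤ μ U := by
    intro U hU
    rw [hμopen _ (hU.preimage hφ), hμopen _ hU]
    refine iSup_le fun C => iSup_le fun hCU => ?_
    have himg : ((⟨φ '' C, C.2.image hφ⟩ : TopologicalSpace.Compacts K) : Set K) ⊆
        ((⟨U, hU⟩ : TopologicalSpace.Opens K) : Set K) := by
      simpa [image_subset_iff] using hCU
    refine le_trans ?_ (Con.le_innerContent _ _ himg)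
    -- con C ≤ con (φ '' C)
    rw [show ∀ C, Con C = (Con.toFun C : ℝ≥0∞) from fun _ => rfl, show ∀ C, Con C = (Con.toFun C : ℝ≥0∞) from fun _ => rfl]
    have : con C ≤ con ⟨φ '' C, C.2.image hφ⟩ := by
      apply Real.toNNReal_mono
      apply csInf_le_csInf (hbb _) (hne _)
      rintro r ⟨h, hh, rfl⟩
      refine ⟨h.comp ⟨φ, hφ⟩, ⟨fun x => hh.1 (φ x), fun x hx => hh.2 (φ x) ⟨x, hx, rfl⟩⟩,
        hinv h⟩
    exact_mod_cast this
  have hmeas_le : ∀ B : Set K, MeasurableSet B → μ (φ ⁻¹' B) ≤ μ B := by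
    intro B _
    rw [Set.measure_eq_iInf_isOpen B μ]
    simp only [le_iInf_iff]
    intro U hBU hU
    exact le_trans (measure_mono (preimage_mono hBU)) (hopen_le U hU)
  have hmap : μ.map φ = μ := by
    refine Measure.ext fun B hB => ?_
    rw [Measure.map_apply hφ.measurable hB]
    refine le_antisymm (hmeas_le B hB) ?_
    have h1 := hmeas_le Bᶜ hB.compl
    have pA : μ B + μ Bᶜ = 1 := by
      rw [measure_add_measure_compl hB, hμuniv]
    have pB : μ (φ ⁻¹' B) + μ (φ ⁻¹' B)ᶜ = 1 := by
      rw [measure_add_measure_compl (hB.preimage hφ.measurable), hμuniv]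
    have hfin : μ (φ ⁻¹' B)ᶜ ≠ ⊤ := by
      exact (measure_lt_top μ _).ne
    have : μ B + μ (φ ⁻¹' B)ᶜ ≤ μ (φ ⁻¹' B) + μ (φ ⁻¹' B)ᶜ := by
      rw [pB, ← pA]
      rw [← Set.preimage_compl] at *
      exact add_le_add_right h1 _
    exact (ENNReal.add_le_add_iff_right hfin).mp this
  -- apply the hypothesis
  have hint : ∫ x, g x ∂μ = 0 := hyp μ hprob hreg hmap
  have hgint : Integrable (fun x => g x) μ := g.continuous.integrable_of_hasCompactSupport
    (HasCompactSupport.of_compactSpace g)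
  have hg_ae : (fun x => g x) =ᵐ[μ] 0 :=
    (integral_eq_zero_iff_of_nonneg hg0 hgint).mp hint
  have hE : μ {x | g x ≠ 0} = 0 := by
    have := hg_ae
    rw [Filter.EventuallyEq, ae_iff] at this
    simpa using this
  have hμV : μ {x | 0 < g x} = 0 :=
    measure_mono_null (fun x hx => ne_of_gt hx) hE
  -- Urysohn function
  set t : ℝ := L / 2 with ht
  have ht0 : 0 < t := by positivity
  have hFc : IsClosed {x | t ≤ g x} := isClosed_le continuous_const g.continuous
  have hsc : IsClosed {x | g x ≤ t / 2} := isClosed_le g.continuous continuous_const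
  have hdisj : Disjoint {x | g x ≤ t / 2} {x | t ≤ g x} := by
    rw [Set.disjoint_left]
    intro x hx1 hx2
    simp only [mem_setOf_eq] at hx1 hx2
    linarith
  obtain ⟨u, hu0, hu1, huIcc⟩ := exists_continuous_zero_one_of_isClosed hsc hFc hdisj
  set Ch : TopologicalSpace.Compacts K :=
    ⟨closure {x | u x ≠ 0}, isClosed_closure.isCompact⟩ with hCh
  have hChV : (Ch : Set K) ⊆ {x | 0 < g x} := by
    have h1 : {x | u x ≠ 0} ⊆ {x | t / 2 ≤ g x} := by
      intro x hx
      by_contra hcon'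
      exact hx (hu0 (by simpa using le_of_not_ge hcon'))
    have h2 : closure {x | u x ≠ 0} ⊆ {x | t / 2 ≤ g x} :=
      closure_minimal h1 (isClosed_le continuous_const g.continuous)
    intro x hx
    have := h2 hx
    simp only [mem_setOf_eq] at this ⊢
    linarith
  -- content of Ch vanishes
  have hconCh : con Ch = 0 := by
    have hVopen : IsOpen {x | 0 < g x} := isOpen_lt continuous_const g.continuous
    have h1 : (con Ch : ℝ≥0∞) ≤ μ {x | 0 < g x} := by
      rw [hμopen _ hVopen]
      exact Con.le_innerContent Ch ⟨_, hVopen⟩ hChV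
    rw [hμV] at h1
    simpa using h1
  have hsInfCh : sInf (vals (Ch : Set K)) = 0 := by
    have h1 : (sInf (vals (Ch : Set K))).toNNReal = 0 := hconCh
    have h2 := hsInf_nonneg (Ch : Set K)
    have := Real.toNNReal_eq_zero.mp h1
    linarith
  have hℓu : ℓ u ≤ 0 := by
    rw [← hsInfCh]
    refine le_csInf (hne _) ?_
    rintro _ ⟨h, hh, rfl⟩
    refine hmono u h fun x => ?_
    by_cases hx : u x = 0
    · rw [hx]; exact hh.1 x
    · exact le_trans (huIcc x).2 (hh.2 x (subset_closure hx))
  -- final contradiction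
  have hgle : ∀ x, g x ≤ (t • (1 : C(K, ℝ)) + ‖g‖ • u) x := by
    intro x
    simp only [ContinuousMap.add_apply, ContinuousMap.smul_apply, ContinuousMap.one_apply,
      smul_eq_mul, mul_one]
    by_cases hx : t ≤ g x
    · have : u x = 1 := hu1 hx
      rw [this, mul_one]
      have hgx : g x ≤ ‖g‖ := by
        calc g x ≤ |g x| := le_abs_self _
          _ = ‖g x‖ := (Real.norm_eq_abs _).symm
          _ ≤ ‖g‖ := g.norm_coe_le_norm x
      linarith
    · push_neg at hx
      have : 0 ≤ ‖g‖ * u x := mul_nonneg (norm_nonneg _) (huIcc x).1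
      linarith
  have hfin : ℓ g ≤ t := by
    calc ℓ g ≤ ℓ (t • (1 : C(K, ℝ)) + ‖g‖ • u) := hmono _ _ hgle
      _ = t * ℓ 1 + ‖g‖ * ℓ u := by rw [hadd, hsmul, hsmul]
      _ = t + ‖g‖ * ℓ u := by rw [hone, mul_one]
      _ ≤ t := by nlinarith [norm_nonneg g]
  rw [ht] at hfin
  linarith

lemma cesaro_sup_tendsto_zero [Nonempty K] (φ : K → K) (hφ : Continuous φ) (g : C(K, ℝ))
    (hg0 : ∀ x, 0 ≤ g x)
    (hyp : ∀ μ : Measure K, IsProbabilityMeasure μ → μ.Regular → μ.map φ = μ →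
        ∫ x, g x ∂μ = 0) :
    Tendsto (fun N : ℕ => ‖∑ n ∈ Finset.range N, g.comp ⟨φ^[n], hφ.iterate n⟩‖ / N)
      atTop (𝓝 0) := by
  set S : ℕ → C(K, ℝ) := fun N => ∑ n ∈ Finset.range N, g.comp ⟨φ^[n], hφ.iterate n⟩ with hS
  set b : ℕ → ℝ := fun N => ‖S N‖ with hb
  have hSapp : ∀ N x, S N x = ∑ n ∈ Finset.range N, g (φ^[n] x) := by
    intro N x
    simp [hS]
  have hSnn : ∀ N x, 0 ≤ S N x := by
    intro N x
    rw [hSapp]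
    exact Finset.sum_nonneg fun n _ => hg0 _
  have hSle : ∀ N x, S N x ≤ b N := fun N x =>
    (le_abs_self _).trans (by rw [← Real.norm_eq_abs]; exact (S N).norm_coe_le_norm x)
  have hb0 : ∀ N, 0 ≤ b N := fun N => norm_nonneg _
  have hsub : Subadditive b := by
    intro m n
    have hpt : ∀ x, S (m + n) x = S m x + S n (φ^[m] x) := by
      intro x
      rw [hSapp, hSapp, hSapp, Finset.sum_range_add]
      congr 1
      refine Finset.sum_congr rfl fun k _ => ?_
      rw [add_comm m k, Function.iterate_add_apply]
    refine (ContinuousMap.norm_le _ (add_nonneg (hb0 m) (hb0 n))).mpr fun x => ?_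
    rw [hpt x, Real.norm_eq_abs, abs_of_nonneg (add_nonneg (hSnn m x) (hSnn n _))]
    exact add_le_add (hSle m x) (hSle n _)
  have hbdd : BddBelow (Set.range fun n : ℕ => b n / n) := by
    refine ⟨0, ?_⟩
    rintro _ ⟨n, rfl⟩
    positivity
  have htend := hsub.tendsto_lim hbdd
  have hL0 : 0 ≤ hsub.lim :=
    ge_of_tendsto htend (Eventually.of_forall fun n => by positivity)
  rcases le_or_gt hsub.lim 0 with hL | hL
  · have h0 : hsub.lim = 0 := le_antisymm hL hL0
    rw [h0] at htend
    exact htend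
  · exfalso
    -- maximizing points
    have hex : ∀ N : ℕ, ∃ x, ∀ y, S N y ≤ S N x := by
      intro N
      obtain ⟨x, -, hx⟩ :=
        isCompact_univ.exists_isMaxOn univ_nonempty ((S N).continuous.continuousOn)
      exact ⟨x, fun y => hx (mem_univ y)⟩
    choose xm hxm using hex
    have hbmax : ∀ N, b N = S N (xm N) := by
      intro N
      refine le_antisymm ?_ (hSle N (xm N))
      refine (ContinuousMap.norm_le _ (hSnn N (xm N))).mpr fun x => ?_
      rw [Real.norm_eq_abs, abs_of_nonneg (hSnn N x)]
      exact hxm N x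
    set Λ : ℕ → (C(K, ℝ) → ℝ) :=
      fun N h => (N : ℝ)⁻¹ * ∑ n ∈ Finset.range N, h (φ^[n] (xm N)) with hΛ
    have hΛabs : ∀ (N) (h : C(K, ℝ)), |Λ N h| ≤ ‖h‖ := by
      intro N h
      rcases Nat.eq_zero_or_pos N with h0 | h0
      · simp [hΛ, h0]
      calc |Λ N h| ≤ (N : ℝ)⁻¹ * ∑ n ∈ Finset.range N, |h (φ^[n] (xm N))| := by
            rw [hΛ, abs_mul, abs_inv, Nat.abs_cast]
            exact mul_le_mul_of_nonneg_left (Finset.abs_sum_le_sum_abs _ _) (by positivity)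
        _ ≤ (N : ℝ)⁻¹ * ∑ n ∈ Finset.range N, ‖h‖ := by
            gcongr with n hn
            rw [← Real.norm_eq_abs]
            exact h.norm_coe_le_norm _
        _ = (N : ℝ)⁻¹ * ((N : ℝ) * ‖h‖) := by
            rw [Finset.sum_const, Finset.card_range, nsmul_eq_mul]
        _ = ‖h‖ := by
            rw [← mul_assoc, inv_mul_cancel₀ (by positivity), one_mul]
    set Sset : Set (C(K, ℝ) → ℝ) := Set.pi univ fun h : C(K, ℝ) => Icc (-‖h‖) ‖h‖ with hSset
    have hmemS : ∀ N, Λ N ∈ Sset := by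
      intro N h _
      exact abs_le.mp (hΛabs N h)
    have hcpt : IsCompact Sset := isCompact_univ_pi fun h => isCompact_Icc
    obtain ⟨ℓ, -, hℓ⟩ :=
      hcpt.exists_clusterPt (f := map Λ atTop)
        (le_principal_iff.mpr (mem_map.mpr (Eventually.of_forall hmemS)))
    have hmcp : MapClusterPt ℓ atTop Λ := hℓ
    have key : ∀ (G : (C(K, ℝ) → ℝ) → ℝ), Continuous G → ∀ (C : Set ℝ), IsClosed C →
        (∀ᶠ N in atTop, G (Λ N) ∈ C) → G ℓ ∈ C := fun G hG C hC hev =>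
      mapClusterPt_mem_of_eventually (MapClusterPt.continuousAt_comp hG.continuousAt hmcp) hC hev
    have hadd : ∀ h₁ h₂ : C(K, ℝ), ℓ (h₁ + h₂) = ℓ h₁ + ℓ h₂ := by
      intro h₁ h₂
      have hval : ∀ N, Λ N (h₁ + h₂) - Λ N h₁ - Λ N h₂ = 0 := by
        intro N
        simp only [hΛ, ContinuousMap.add_apply, Finset.sum_add_distrib, mul_add]
        ring
      have := key (fun p => p (h₁ + h₂) - p h₁ - p h₂)
        (((continuous_apply (h₁ + h₂)).sub (continuous_apply h₁)).sub (continuous_apply h₂))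
        {0} isClosed_singleton (Eventually.of_forall fun N => by simp [hval N])
      simp only [mem_singleton_iff] at this
      linarith
    have hsmul : ∀ (c : ℝ) (h : C(K, ℝ)), ℓ (c • h) = c * ℓ h := by
      intro c h
      have hval : ∀ N, Λ N (c • h) - c * Λ N h = 0 := by
        intro N
        simp only [hΛ, ContinuousMap.smul_apply, smul_eq_mul, ← Finset.mul_sum]
        ring
      have := key (fun p => p (c • h) - c * p h)
        ((continuous_apply _).sub (continuous_const.mul (continuous_apply _)))
        {0} isClosed_singleton (Eventually.of_forall fun N => by simp [hval N])
      simp only [mem_singleton_iff] at this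
      linarith
    have hpos : ∀ h : C(K, ℝ), (∀ x, 0 ≤ h x) → 0 ≤ ℓ h := by
      intro h hh
      exact key (fun p => p h) (continuous_apply _) (Ici 0) isClosed_Ici
        (Eventually.of_forall fun N => by
          simp only [hΛ, mem_Ici]
          exact mul_nonneg (by positivity) (Finset.sum_nonneg fun n _ => hh _))
    have hone : ℓ (1 : C(K, ℝ)) = 1 := by
      have := key (fun p => p 1) (continuous_apply _) {1} isClosed_singleton ?_
      · simpa using this
      · filter_upwards [eventually_ge_atTop 1] with N hN
        have hN0 : (N : ℝ) ≠ 0 := by positivity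
        simp [hΛ, hN0]
    have hinv : ∀ h : C(K, ℝ), ℓ (h.comp ⟨φ, hφ⟩) = ℓ h := by
      intro h
      have hdiff : ∀ ε : ℝ, 0 < ε → |ℓ (h.comp ⟨φ, hφ⟩) - ℓ h| ≤ ε := by
        intro ε hε
        have h2 : Tendsto (fun N : ℕ => 2 * ‖h‖ / N) atTop (𝓝 0) :=
          tendsto_const_div_atTop_nhds_zero_nat _
        have hev : ∀ᶠ N in atTop, Λ N (h.comp ⟨φ, hφ⟩) - Λ N h ∈ Icc (-ε) ε := by
          filter_upwards [h2.eventually_lt_const hε, eventually_ge_atTop 1] with N h2N h1N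
          have hNpos : (0 : ℝ) < N := by exact_mod_cast h1N
          have hcomp : Λ N (h.comp ⟨φ, hφ⟩) - Λ N h
              = (N : ℝ)⁻¹ * (h (φ^[N] (xm N)) - h (xm N)) := by
            rw [hΛ]
            simp only
            rw [← mul_sub, ← Finset.sum_sub_distrib]
            congr 1
            calc ∑ n ∈ Finset.range N,
                  ((h.comp ⟨φ, hφ⟩) (φ^[n] (xm N)) - h (φ^[n] (xm N)))
                = ∑ n ∈ Finset.range N,
                  (h (φ^[n + 1] (xm N)) - h (φ^[n] (xm N))) := by
                  refine Finset.sum_congr rfl fun n _ => ?_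
                  simp [Function.iterate_succ_apply']
              _ = h (φ^[N] (xm N)) - h (φ^[0] (xm N)) :=
                  Finset.sum_range_sub (fun n => h (φ^[n] (xm N))) N
              _ = h (φ^[N] (xm N)) - h (xm N) := by simp
          rw [hcomp]
          rw [mem_Icc, ← abs_le]
          calc |(N : ℝ)⁻¹ * (h (φ^[N] (xm N)) - h (xm N))|
              ≤ (N : ℝ)⁻¹ * (2 * ‖h‖) := by
                rw [abs_mul, abs_inv, Nat.abs_cast]
                refine mul_le_mul_of_nonneg_left ?_ (by positivity)
                calc |h (φ^[N] (xm N)) - h (xm N)|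
                    ≤ |h (φ^[N] (xm N))| + |h (xm N)| := abs_sub _ _
                  _ ≤ ‖h‖ + ‖h‖ := add_le_add
                      (by rw [← Real.norm_eq_abs]; exact h.norm_coe_le_norm _)
                      (by rw [← Real.norm_eq_abs]; exact h.norm_coe_le_norm _)
                  _ = 2 * ‖h‖ := by ring
            _ = 2 * ‖h‖ / N := by ring
            _ ≤ ε := le_of_lt h2N
        have := key (fun p => p (h.comp ⟨φ, hφ⟩) - p h)
          ((continuous_apply _).sub (continuous_apply _)) (Icc (-ε) ε) isClosed_Icc hev
        rw [abs_le, ← mem_Icc]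
        exact this
      by_contra hne'
      have hd : 0 < |ℓ (h.comp ⟨φ, hφ⟩) - ℓ h| := by
        rw [abs_pos, sub_ne_zero]
        exact hne'
      linarith [hdiff (|ℓ (h.comp ⟨φ, hφ⟩) - ℓ h| / 2) (by linarith)]
    have hgL : hsub.lim ≤ ℓ g := by
      have := key (fun p => p g) (continuous_apply _) (Ici hsub.lim) isClosed_Ici ?_
      · simpa using this
      · filter_upwards [eventually_ge_atTop 1] with N hN
        have hNpos : (0 : ℝ) < N := by exact_mod_cast hN
        have h1 : hsub.lim ≤ b N / N := hsub.lim_le_div hbdd (by omega)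
        have h2 : Λ N g = b N / N := by
          rw [hΛ]
          simp only
          rw [← hSapp, ← hbmax, inv_mul_eq_div]
        simp only [mem_Ici, h2]
        exact h1
    exact exists_invariant_measure_aux φ hφ g hg0 ℓ hadd hsmul hpos hone hinv hL hgL hyp
end Main

/-- For the Koopman operator of a continuous map `φ` and `f ∈ C(K, ℂ)`:
`∫ |f| dμ = 0` for every `φ`-invariant regular Borel probability measure `μ` iff the
Cesàro averages `(1/N) ∑_{n<N} |⟨T_φ^n f, ν⟩|` tend to `0` for every `ν ∈ C(K)'`. -/
theorem stmt11 {K : Type} [TopologicalSpace K] [CompactSpace K] [T2Space K]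
    [MeasurableSpace K] [BorelSpace K]
    (φ : K → K) (hφ : Continuous φ) (f : C(K, ℂ)) :
    (∀ μ : Measure K, IsProbabilityMeasure μ → μ.Regular → μ.map φ = μ →
        ∫ x, ‖f x‖ ∂μ = 0) ↔
      ∀ ψ : C(K, ℂ) →L[ℂ] ℂ,
        Tendsto
          (fun N : ℕ => (1 / (N : ℝ)) * ∑ n ∈ Finset.range N,
            ‖ψ (f.comp ⟨φ^[n], hφ.iterate n⟩)‖)
          atTop (nhds (0 : ℝ)) := by
  constructor
  · -- forward direction
    intro hyp ψ
    rcases isEmpty_or_nonempty K with hK | hK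
    · have hz : ∀ n : ℕ, f.comp ⟨φ^[n], hφ.iterate n⟩ = 0 := fun n => by
        ext x; exact hK.elim x
      have hfun : (fun N : ℕ => (1 / (N : ℝ)) * ∑ n ∈ Finset.range N,
          ‖ψ (f.comp ⟨φ^[n], hφ.iterate n⟩)‖) = fun _ => (0 : ℝ) := by
        funext N; simp [hz]
      rw [hfun]
      exact tendsto_const_nhds
    · set gC : C(K, ℝ) := ⟨fun x => ‖f x‖,
        continuous_norm.comp f.continuous⟩ with hgC
      have key := cesaro_sup_tendsto_zero φ hφ gC (fun x => norm_nonneg (f x)) hyp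
      set b : ℕ → ℝ :=
        fun N => ‖∑ n ∈ Finset.range N, gC.comp ⟨φ^[n], hφ.iterate n⟩‖ with hb
      set fn : ℕ → C(K, ℂ) := fun n => f.comp ⟨φ^[n], hφ.iterate n⟩ with hfn
      have main : ∀ N : ℕ,
          ∑ n ∈ Finset.range N, ‖ψ (fn n)‖ ≤ ‖ψ‖ * b N := by
        intro N
        set c : ℕ → ℂ := fun n => if ψ (fn n) = 0 then 1
          else (starRingEnd ℂ) (ψ (fn n)) / ((‖ψ (fn n)‖ : ℝ) : ℂ) with hc
        have hcnorm : ∀ n, ‖c n‖ = 1 := by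
          intro n
          by_cases h : ψ (fn n) = 0
          · simp [hc, h]
          · have habs0 : ‖ψ (fn n)‖ ≠ 0 := norm_ne_zero_iff.mpr h
            simp only [hc, if_neg h, norm_div, RCLike.norm_conj]
            rw [Complex.norm_real, Real.norm_eq_abs, abs_of_nonneg (norm_nonneg _),
              div_self habs0]
        have hcz : ∀ n, c n * ψ (fn n) = ((‖ψ (fn n)‖ : ℝ) : ℂ) := by
          intro n
          by_cases h : ψ (fn n) = 0
          · simp [hc, h]
          · have habs0 : ((‖ψ (fn n)‖ : ℝ) : ℂ) ≠ 0 := by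
              exact_mod_cast norm_ne_zero_iff.mpr h
            simp only [hc, if_neg h]
            field_simp
            rw [mul_comm, Complex.mul_conj, Complex.normSq_eq_norm_sq]
            push_cast
            ring
        set F : C(K, ℂ) := ∑ n ∈ Finset.range N, c n • fn n with hF
        have hψF : ψ F = ((∑ n ∈ Finset.range N, ‖ψ (fn n)‖ : ℝ) : ℂ) := by
          rw [hF, map_sum]
          simp only [ContinuousLinearMap.map_smul, smul_eq_mul, hcz]
          push_cast
          rfl
        have heq : ∑ n ∈ Finset.range N, ‖ψ (fn n)‖ = ‖ψ F‖ := by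
          rw [hψF, Complex.norm_real, Real.norm_eq_abs,
            abs_of_nonneg (Finset.sum_nonneg fun n _ => norm_nonneg _)]
        have hFle : ‖F‖ ≤ b N := by
          refine (ContinuousMap.norm_le _ (norm_nonneg _)).mpr fun x => ?_
          have hFx : F x = ∑ n ∈ Finset.range N, c n * fn n x := by
            simp [hF]
          rw [hFx]
          calc ‖∑ n ∈ Finset.range N, c n * fn n x‖
              ≤ ∑ n ∈ Finset.range N, ‖c n * fn n x‖ := norm_sum_le _ _
            _ = ∑ n ∈ Finset.range N, ‖fn n x‖ := by
                refine Finset.sum_congr rfl fun n _ => ?_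
                rw [norm_mul, hcnorm n, one_mul]
            _ = (∑ n ∈ Finset.range N, gC.comp ⟨φ^[n], hφ.iterate n⟩) x := by
                simp [hgC, hfn]
            _ ≤ b N := by
                refine (le_abs_self _).trans ?_
                rw [← Real.norm_eq_abs]
                exact ContinuousMap.norm_coe_le_norm _ x
        calc ∑ n ∈ Finset.range N, ‖ψ (fn n)‖ = ‖ψ F‖ := heq
          _ ≤ ‖ψ‖ * ‖F‖ := ψ.le_opNorm F
          _ ≤ ‖ψ‖ * b N := mul_le_mul_of_nonneg_left hFle (norm_nonneg ψ)
      refine squeeze_zero (g := fun N => ‖ψ‖ * (b N / N)) (fun N => ?_) (fun N => ?_) ?_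
      · exact mul_nonneg (by positivity)
          (Finset.sum_nonneg fun n _ => norm_nonneg _)
      · show (1 / (N : ℝ)) * ∑ n ∈ Finset.range N, ‖ψ (fn n)‖
          ≤ ‖ψ‖ * (b N / N)
        calc (1 / (N : ℝ)) * ∑ n ∈ Finset.range N, ‖ψ (fn n)‖
            ≤ (1 / (N : ℝ)) * (‖ψ‖ * b N) :=
              mul_le_mul_of_nonneg_left (main N) (by positivity)
          _ = ‖ψ‖ * (b N / N) := by ring
      · have := key.const_mul ‖ψ‖
        simpa using this
  · -- backward direction
    intro hψ μ hprob hreg hmap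
    have hpt : ∀ x : K, Tendsto (fun N : ℕ => (1 / (N : ℝ)) * ∑ n ∈ Finset.range N,
        ‖f (φ^[n] x)‖) atTop (𝓝 0) := by
      intro x
      have := hψ (ContinuousMap.evalCLM ℂ x)
      simpa using this
    have hmeas : ∀ n : ℕ, Measurable (φ^[n]) := fun n => (hφ.iterate n).measurable
    have hiter : ∀ n : ℕ, μ.map (φ^[n]) = μ := by
      intro n
      induction n with
      | zero => simp
      | succ n ih =>
        rw [Function.iterate_succ, ← Measure.map_map (hmeas n) hφ.measurable, hmap, ih]
    have hcont : ∀ n : ℕ, Continuous fun x => ‖f (φ^[n] x)‖ :=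
      fun n => continuous_norm.comp (f.continuous.comp (hφ.iterate n))
    have hint : ∀ n : ℕ, Integrable (fun x => ‖f (φ^[n] x)‖) μ := fun n =>
      (hcont n).integrable_of_hasCompactSupport (HasCompactSupport.of_compactSpace _)
    have habs : Continuous fun x : K => ‖f x‖ :=
      continuous_norm.comp f.continuous
    have hinteq : ∀ n : ℕ, ∫ x, ‖f (φ^[n] x)‖ ∂μ
        = ∫ x, ‖f x‖ ∂μ := by
      intro n
      conv_rhs => rw [← hiter n]
      rw [integral_map (hmeas n).aemeasurable habs.aestronglyMeasurable]
    have hFint : ∀ N : ℕ, 1 ≤ N →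
        ∫ x, (1 / (N : ℝ)) * ∑ n ∈ Finset.range N, ‖f (φ^[n] x)‖ ∂μ
          = ∫ x, ‖f x‖ ∂μ := by
      intro N hN
      have hN0 : (N : ℝ) ≠ 0 := by positivity
      rw [integral_const_mul, integral_finset_sum _ (fun n _ => hint n),
        Finset.sum_congr rfl (fun n _ => hinteq n), Finset.sum_const, Finset.card_range,
        nsmul_eq_mul]
      field_simp
    have hdom : Tendsto (fun N : ℕ => ∫ x, (1 / (N : ℝ)) * ∑ n ∈ Finset.range N,
        ‖f (φ^[n] x)‖ ∂μ) atTop (𝓝 (∫ _ : K, (0 : ℝ) ∂μ)) := by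
      refine tendsto_integral_of_dominated_convergence (fun _ => ‖f‖) ?_ ?_ ?_ ?_
      · intro N
        exact ((continuous_const.mul (continuous_finset_sum _
          fun n _ => hcont n)).aestronglyMeasurable)
      · exact integrable_const _
      · intro N
        refine Eventually.of_forall fun x => ?_
        have hsum : (0 : ℝ) ≤ ∑ n ∈ Finset.range N, ‖f (φ^[n] x)‖ :=
          Finset.sum_nonneg fun n _ => norm_nonneg _
        rw [Real.norm_eq_abs, abs_of_nonneg (mul_nonneg (by positivity) hsum)]
        calc (1 / (N : ℝ)) * ∑ n ∈ Finset.range N, ‖f (φ^[n] x)‖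
            ≤ (1 / (N : ℝ)) * ∑ n ∈ Finset.range N, ‖f‖ := by
              gcongr with n hn
              exact f.norm_coe_le_norm _
          _ = (1 / (N : ℝ)) * ((N : ℝ) * ‖f‖) := by
              rw [Finset.sum_const, Finset.card_range, nsmul_eq_mul]
          _ ≤ ‖f‖ := by
              rcases Nat.eq_zero_or_pos N with h0 | h0
              · simp [h0]
              · have : (N : ℝ) ≠ 0 := by positivity
                rw [one_div, ← mul_assoc, inv_mul_cancel₀ this, one_mul]
      · exact Eventually.of_forall hpt
    rw [integral_zero] at hdom
    have hconst : Tendsto (fun _ : ℕ => ∫ x, ‖f x‖ ∂μ) atTop (𝓝 0) := by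
      refine hdom.congr' ?_
      filter_upwards [eventually_ge_atTop 1] with N hN
      exact hFint N hN
    exact tendsto_nhds_unique tendsto_const_nhds hconst
end

section
/- Let K be a compact metrizable space and φ: K → K continuous. A nonempty closed set L ⊆ K is a center of attraction (i.e., for every open U ⊇ L and every x ∈ K, lim_{N→∞} (1/N)#{0 ≤ n < N : φ^n(x) ∈ U} = 1) if and only if every f ∈ C(K) vanishing on L satisfies ∫|f| dμ = 0 for all φ-invariant probability measures μ. -/
open MeasureTheory Filter
open scoped Classical
set_option linter.unusedSectionVars false
set_option linter.unusedVariables false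
set_option maxHeartbeats 1000000

section clampsum
open Set

theorem stmt13_clamp_sum {δ : ℝ} (hδ : 0 < δ) :
    ∀ (n : ℕ) (t : ℝ), 0 ≤ t → t ≤ n * δ →
      δ * ∑ i ∈ Finset.range n, min (max ((t - (i : ℝ) * δ) / δ) 0) 1 = t := by
  intro n
  induction n with
  | zero => intro t ht0 ht1; simp at ht1 ⊢; linarith
  | succ n ih =>
    intro t ht0 ht1
    rw [Finset.sum_range_succ]
    by_cases h : t ≤ n * δ
    · have hlast : min (max ((t - (n : ℝ) * δ) / δ) 0) 1 = 0 := by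
        have : (t - (n : ℝ) * δ) / δ ≤ 0 := div_nonpos_iff.2 (Or.inr ⟨by linarith, hδ.le⟩)
        rw [max_eq_right this, min_eq_left zero_le_one]
      rw [hlast, add_zero, ih t ht0 h]
    · push_neg at h
      have hones : ∑ i ∈ Finset.range n, min (max ((t - (i : ℝ) * δ) / δ) 0) 1
          = (n : ℝ) := by
        have : ∀ i ∈ Finset.range n,
            min (max ((t - (i : ℝ) * δ) / δ) 0) 1 = 1 := by
          intro i hi
          have hin : (i : ℝ) + 1 ≤ (n : ℝ) := by
            exact_mod_cast Nat.succ_le_of_lt (Finset.mem_range.1 hi)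
          have h1 : (1 : ℝ) ≤ (t - (i : ℝ) * δ) / δ := by
            rw [le_div_iff₀ hδ]; nlinarith
          rw [min_eq_right (le_trans h1 (le_max_left _ _))]
        rw [Finset.sum_congr rfl this]
        simp
      have hlast : min (max ((t - (n : ℝ) * δ) / δ) 0) 1 = (t - (n : ℝ) * δ) / δ := by
        have h0 : 0 ≤ (t - (n : ℝ) * δ) / δ := div_nonneg (by linarith) hδ.le
        have h1 : (t - (n : ℝ) * δ) / δ ≤ 1 := by
          rw [div_le_one hδ]; push_cast at ht1; linarith
        rw [max_eq_left h0, min_eq_left h1]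
      rw [hones, hlast]
      field_simp
      ring

end clampsum

section RMK

open Set

variable {K : Type} [TopologicalSpace K] [CompactSpace K] [T2Space K]
  [MeasurableSpace K] [BorelSpace K]

/-- Admissible competitors for the Riesz content of a set `C`. -/
def stmt13Admiss (C : Set K) : Set C(K, ℝ) :=
  {g | (∀ x, 0 ≤ g x) ∧ ∀ x ∈ C, 1 ≤ g x}

/-- The Riesz content associated to a positive normalized functional. -/
noncomputable def stmt13Lam (Λ : WeakDual ℝ C(K, ℝ)) (C : Set K) : ℝ :=
  sInf (⇑Λ '' stmt13Admiss C)

namespace stmt13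

variable {Λ : WeakDual ℝ C(K, ℝ)}

theorem one_mem_admiss (C : Set K) : (1 : C(K, ℝ)) ∈ stmt13Admiss C :=
  ⟨fun _ => zero_le_one, fun _ _ => le_refl _⟩

theorem lam_le (hpos : ∀ g : C(K, ℝ), (∀ x, 0 ≤ g x) → 0 ≤ Λ g)
    {C : Set K} {g : C(K, ℝ)} (hg : g ∈ stmt13Admiss C) : stmt13Lam Λ C ≤ Λ g := by
  apply csInf_le
  · exact ⟨0, by rintro y ⟨h, hh, rfl⟩; exact hpos h hh.1⟩
  · exact ⟨g, hg, rfl⟩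

theorem le_lam {c : ℝ} {C : Set K}
    (h : ∀ g ∈ stmt13Admiss C, c ≤ Λ g) : c ≤ stmt13Lam Λ C := by
  apply le_csInf
  · exact ⟨Λ 1, 1, one_mem_admiss C, rfl⟩
  · rintro y ⟨g, hg, rfl⟩; exact h g hg

theorem lam_nonneg (hpos : ∀ g : C(K, ℝ), (∀ x, 0 ≤ g x) → 0 ≤ Λ g) (C : Set K) :
    0 ≤ stmt13Lam Λ C :=
  le_lam fun g hg => hpos g hg.1

theorem lam_mono (hpos : ∀ g : C(K, ℝ), (∀ x, 0 ≤ g x) → 0 ≤ Λ g)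
    {C D : Set K} (h : C ⊆ D) : stmt13Lam Λ C ≤ stmt13Lam Λ D :=
  le_lam fun g hg => lam_le hpos ⟨hg.1, fun x hx => hg.2 x (h hx)⟩

theorem mono_of_pos (hpos : ∀ g : C(K, ℝ), (∀ x, 0 ≤ g x) → 0 ≤ Λ g)
    {g h : C(K, ℝ)} (hle : ∀ x, g x ≤ h x) : Λ g ≤ Λ h := by
  have := hpos (h - g) (fun x => by simpa using hle x)
  have hsub : Λ (h - g) = Λ h - Λ g := map_sub Λ h g
  linarith [hsub ▸ this]

theorem lam_le_one (hpos : ∀ g : C(K, ℝ), (∀ x, 0 ≤ g x) → 0 ≤ Λ g)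
    (hone : Λ 1 = 1) (C : Set K) : stmt13Lam Λ C ≤ 1 := by
  simpa [hone] using lam_le hpos (one_mem_admiss C)

theorem lam_univ (hpos : ∀ g : C(K, ℝ), (∀ x, 0 ≤ g x) → 0 ≤ Λ g)
    (hone : Λ 1 = 1) : stmt13Lam Λ (univ : Set K) = 1 := by
  refine le_antisymm (lam_le_one hpos hone _) (le_lam fun g hg => ?_)
  have : Λ 1 ≤ Λ g := mono_of_pos hpos fun x => by simpa using hg.2 x (mem_univ x)
  simpa [hone] using this

theorem lam_union_le (hpos : ∀ g : C(K, ℝ), (∀ x, 0 ≤ g x) → 0 ≤ Λ g)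
    (C D : Set K) : stmt13Lam Λ (C ∪ D) ≤ stmt13Lam Λ C + stmt13Lam Λ D := by
  have H : ∀ g ∈ stmt13Admiss C, ∀ h ∈ stmt13Admiss D,
      stmt13Lam Λ (C ∪ D) ≤ Λ g + Λ h := by
    intro g hg h hh
    have hmem : g + h ∈ stmt13Admiss (C ∪ D) := by
      refine ⟨fun x => add_nonneg (hg.1 x) (hh.1 x), fun x hx => ?_⟩
      rcases hx with hx | hx
      · have := hg.2 x hx; have := hh.1 x
        simp only [ContinuousMap.add_apply]; linarith
      · have := hh.2 x hx; have := hg.1 x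
        simp only [ContinuousMap.add_apply]; linarith
    simpa [map_add] using lam_le hpos hmem
  have H2 : stmt13Lam Λ (C ∪ D) - stmt13Lam Λ C ≤ stmt13Lam Λ D := by
    refine le_lam fun h hh => ?_
    have H3 : stmt13Lam Λ (C ∪ D) - Λ h ≤ stmt13Lam Λ C :=
      le_lam fun g hg => by linarith [H g hg h hh]
    linarith
  linarith

theorem lam_union_disjoint (hpos : ∀ g : C(K, ℝ), (∀ x, 0 ≤ g x) → 0 ≤ Λ g)
    {C D : Set K} (hC : IsClosed C) (hD : IsClosed D) (hdisj : Disjoint C D) :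
    stmt13Lam Λ (C ∪ D) = stmt13Lam Λ C + stmt13Lam Λ D := by
  refine le_antisymm (lam_union_le hpos C D) ?_
  obtain ⟨χ, hχD, hχC, hχ01⟩ := exists_continuous_zero_one_of_isClosed hD hC hdisj.symm
  refine le_lam fun g hg => ?_
  have h1 : g * χ ∈ stmt13Admiss C := by
    refine ⟨fun x => mul_nonneg (hg.1 x) (hχ01 x).1, fun x hx => ?_⟩
    have := hg.2 x (Or.inl hx)
    have hx1 : χ x = 1 := hχC hx
    simp only [ContinuousMap.mul_apply, hx1, mul_one]
    exact this
  have h2 : g * (1 - χ) ∈ stmt13Admiss D := by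
    refine ⟨fun x => mul_nonneg (hg.1 x) (by have := (hχ01 x).2; simp; linarith), fun x hx => ?_⟩
    have := hg.2 x (Or.inr hx)
    have hx0 : χ x = 0 := hχD hx
    simp only [ContinuousMap.mul_apply, ContinuousMap.sub_apply, ContinuousMap.one_apply, hx0]
    simpa using this
  have hsum : g * χ + g * (1 - χ) = g := by ext x; simp; ring
  have := add_le_add (lam_le hpos h1) (lam_le hpos h2)
  calc stmt13Lam Λ C + stmt13Lam Λ D ≤ Λ (g * χ) + Λ (g * (1 - χ)) := this
    _ = Λ (g * χ + g * (1 - χ)) := (map_add Λ _ _).symm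
    _ = Λ g := by rw [hsum]

/-- The content built from a positive normalized functional. -/
noncomputable def rieszCon (Λ : WeakDual ℝ C(K, ℝ))
    (hpos : ∀ g : C(K, ℝ), (∀ x, 0 ≤ g x) → 0 ≤ Λ g) : Content K where
  toFun C := Real.toNNReal (stmt13Lam Λ C)
  mono' C D h := Real.toNNReal_mono (lam_mono hpos h)
  sup_disjoint' C D hdisj hCc hDc := by
    have := lam_union_disjoint hpos hCc hDc hdisj
    simp only [TopologicalSpace.Compacts.coe_sup] at *
    rw [this, Real.toNNReal_add (lam_nonneg hpos _) (lam_nonneg hpos _)]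
  sup_le' C D := by
    have h1 := lam_union_le hpos (C : Set K) D
    simp only [TopologicalSpace.Compacts.coe_sup]
    refine le_trans (Real.toNNReal_mono h1) ?_
    exact_mod_cast Real.toNNReal_add_le

variable (hpos : ∀ g : C(K, ℝ), (∀ x, 0 ≤ g x) → 0 ≤ Λ g) (hone : Λ 1 = 1)

theorem measure_open_le (hpos : ∀ g : C(K, ℝ), (∀ x, 0 ≤ g x) → 0 ≤ Λ g)
    {V F : Set K} (hV : IsOpen V) (hVF : V ⊆ F) :
    (rieszCon Λ hpos).measure V ≤ ENNReal.ofReal (stmt13Lam Λ F) := by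
  rw [Content.measure_apply _ hV.measurableSet,
    (rieszCon Λ hpos).outerMeasure_of_isOpen V hV]
  rw [Content.innerContent]
  refine iSup₂_le fun C hC => ?_
  have : stmt13Lam Λ (C : Set K) ≤ stmt13Lam Λ F := lam_mono hpos (hC.trans hVF)
  simp only [rieszCon, ENNReal.ofReal]
  exact ENNReal.coe_le_coe.mpr (Real.toNNReal_mono this)

theorem le_measure_open (hpos : ∀ g : C(K, ℝ), (∀ x, 0 ≤ g x) → 0 ≤ Λ g)
    {V C : Set K} (hV : IsOpen V) (hC : IsCompact C) (hCV : C ⊆ V) :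
    ENNReal.ofReal (stmt13Lam Λ C) ≤ (rieszCon Λ hpos).measure V := by
  rw [Content.measure_apply _ hV.measurableSet,
    (rieszCon Λ hpos).outerMeasure_of_isOpen V hV]
  have := (rieszCon Λ hpos).le_innerContent ⟨C, hC⟩ ⟨V, hV⟩ hCV
  exact le_trans (le_of_eq rfl) this

theorem measure_univ_eq_one (hpos : ∀ g : C(K, ℝ), (∀ x, 0 ≤ g x) → 0 ≤ Λ g)
    (hone : Λ 1 = 1) : (rieszCon Λ hpos).measure (univ : Set K) = 1 := by
  refine le_antisymm ?_ ?_
  · have := measure_open_le hpos (V := (univ : Set K)) (F := univ) isOpen_univ subset_rfl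
    rwa [lam_univ hpos hone, ENNReal.ofReal_one] at this
  · have := le_measure_open hpos (V := (univ : Set K)) isOpen_univ isCompact_univ subset_rfl
    rwa [lam_univ hpos hone, ENNReal.ofReal_one] at this

theorem integrable_cm (μ : Measure K) [IsFiniteMeasure μ] (g : C(K, ℝ)) :
    Integrable ⇑g μ :=
  g.continuous.integrable_of_hasCompactSupport
    ((isClosed_tsupport _).isCompact)

theorem int_le_measureReal {μ : Measure K} [IsFiniteMeasure μ] {h : C(K, ℝ)}
    (h1 : ∀ x, h x ≤ 1) {V : Set K} (hV : MeasurableSet V)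
    (hsupp : ∀ x ∉ V, h x = 0) : ∫ x, h x ∂μ ≤ (μ V).toReal := by
  have hle : ∀ x, h x ≤ V.indicator (fun _ => (1 : ℝ)) x := by
    intro x
    by_cases hx : x ∈ V
    · simpa [Set.indicator_of_mem hx] using h1 x
    · simp [Set.indicator_of_notMem hx, hsupp x hx]
  calc ∫ x, h x ∂μ ≤ ∫ x, V.indicator (fun _ => (1 : ℝ)) x ∂μ :=
        integral_mono (integrable_cm μ h) ((integrable_const 1).indicator hV) hle
    _ = (μ V).toReal := by rw [integral_indicator_const (1 : ℝ) hV]; simp [measureReal_def]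

theorem measureReal_le_int {μ : Measure K} [IsFiniteMeasure μ] {h : C(K, ℝ)}
    (h0 : ∀ x, 0 ≤ h x) {W : Set K} (hW : MeasurableSet W)
    (hone : ∀ x ∈ W, 1 ≤ h x) : (μ W).toReal ≤ ∫ x, h x ∂μ := by
  have hle : ∀ x, W.indicator (fun _ => (1 : ℝ)) x ≤ h x := by
    intro x
    by_cases hx : x ∈ W
    · simpa [Set.indicator_of_mem hx] using hone x hx
    · simp [Set.indicator_of_notMem hx, h0 x]
  calc (μ W).toReal = ∫ x, W.indicator (fun _ => (1 : ℝ)) x ∂μ := by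
        rw [integral_indicator_const (1 : ℝ) hW]; simp [measureReal_def]
    _ ≤ ∫ x, h x ∂μ :=
        integral_mono ((integrable_const 1).indicator hW) (integrable_cm μ h) hle

theorem integral_eq_lam (hpos : ∀ g : C(K, ℝ), (∀ x, 0 ≤ g x) → 0 ≤ Λ g)
    (hone : Λ 1 = 1) (g : C(K, ℝ)) (hg : ∀ x, 0 ≤ g x) :
    ∫ x, g x ∂((rieszCon Λ hpos).measure) = Λ g := by
  set μ := (rieszCon Λ hpos).measure with hμ
  haveI : IsProbabilityMeasure μ := ⟨measure_univ_eq_one hpos hone⟩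
  suffices H : ∀ δ : ℝ, 0 < δ → |∫ x, g x ∂μ - Λ g| ≤ 2 * δ by
    by_contra hne
    have hd : 0 < |∫ x, g x ∂μ - Λ g| := abs_pos.2 (sub_ne_zero.2 hne)
    have := H (|∫ x, g x ∂μ - Λ g| / 4) (by positivity)
    linarith
  intro δ hδ
  set n : ℕ := ⌈‖g‖ / δ⌉₊ + 1 with hn
  have hgle : ∀ x, g x ≤ (n : ℝ) * δ := by
    intro x
    have h1 : ‖g x‖ ≤ ‖g‖ := g.norm_coe_le_norm x
    have h2 : ‖g‖ / δ ≤ (⌈‖g‖ / δ⌉₊ : ℝ) := Nat.le_ceil _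
    have h3 : ‖g‖ ≤ (⌈‖g‖ / δ⌉₊ : ℝ) * δ := by
      rw [div_le_iff₀ hδ] at h2; linarith
    have h4 : ((⌈‖g‖ / δ⌉₊ : ℝ)) * δ ≤ (n : ℝ) * δ := by
      have : ((⌈‖g‖ / δ⌉₊ : ℝ)) ≤ (n : ℝ) := by push_cast [hn]; linarith
      nlinarith
    have := le_trans (le_abs_self (g x)) ((Real.norm_eq_abs (g x)) ▸ h1)
    linarith
  set h : ℕ → C(K, ℝ) := fun i =>
    ⟨fun x => min (max ((g x - (i : ℝ) * δ) / δ) 0) 1,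
      (((g.continuous.sub continuous_const).div_const δ).max continuous_const).min
        continuous_const⟩ with hh
  have h0 : ∀ i x, 0 ≤ h i x := fun i x =>
    le_min (le_max_right _ _) zero_le_one
  have h1 : ∀ i x, h i x ≤ 1 := fun i x => min_le_right _ _
  have heq1 : ∀ (i : ℕ) (x : K), ((i : ℝ) + 1) * δ ≤ g x → h i x = 1 := by
    intro i x hx
    have : (1 : ℝ) ≤ (g x - (i : ℝ) * δ) / δ := by
      rw [le_div_iff₀ hδ]; nlinarith
    exact min_eq_right (le_trans this (le_max_left _ _))
  have heq0 : ∀ (i : ℕ) (x : K), g x ≤ (i : ℝ) * δ → h i x = 0 := by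
    intro i x hx
    have : (g x - (i : ℝ) * δ) / δ ≤ 0 := div_nonpos_iff.2 (Or.inr ⟨by linarith, hδ.le⟩)
    simp only [hh, ContinuousMap.coe_mk]
    rw [max_eq_right this, min_eq_left zero_le_one]
  set F : ℕ → Set K := fun j => {x | (j : ℝ) * δ ≤ g x} with hF
  set V : ℕ → Set K := fun j => {x | (j : ℝ) * δ < g x} with hV
  have hFc : ∀ j, IsCompact (F j) := fun j =>
    (isClosed_le continuous_const g.continuous).isCompact
  have hVo : ∀ j, IsOpen (V j) := fun j => isOpen_lt continuous_const g.continuous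
  set a : ℕ → ℝ := fun i => Λ (h i) with ha
  set b : ℕ → ℝ := fun i => ∫ x, h i x ∂μ with hb
  set p : ℕ → ℝ := fun j => stmt13Lam Λ (F j) with hp
  have key1 : ∀ i, p (i + 1) ≤ a i := by
    intro i
    refine lam_le hpos ⟨h0 i, fun x hx => ?_⟩
    have : ((i : ℝ) + 1) * δ ≤ g x := by
      have := hx; simp only [hF, mem_setOf_eq] at this; push_cast at this ⊢; linarith
    rw [heq1 i x this]
  have key2 : ∀ i, a i ≤ p i := by
    intro i
    refine le_lam fun g' hg' => mono_of_pos hpos fun x => ?_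
    by_cases hx : x ∈ F i
    · exact le_trans (h1 i x) (hg'.2 x hx)
    · have : g x ≤ (i : ℝ) * δ := by
        simp only [hF, mem_setOf_eq, not_le] at hx; linarith
      rw [heq0 i x this]; exact hg'.1 x
  have key3 : ∀ i, b i ≤ p i := by
    intro i
    have hb1 : b i ≤ (μ (V i)).toReal := by
      refine int_le_measureReal (h1 i) (hVo i).measurableSet fun x hx => ?_
      have : g x ≤ (i : ℝ) * δ := by
        simp only [hV, mem_setOf_eq, not_lt] at hx; linarith
      exact heq0 i x this
    have hb2 : μ (V i) ≤ ENNReal.ofReal (p i) := by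
      refine measure_open_le hpos (hVo i) fun x hx => ?_
      simp only [hV, mem_setOf_eq] at hx
      simp only [hF, mem_setOf_eq]
      linarith
    have := ENNReal.toReal_mono ENNReal.ofReal_ne_top hb2
    rw [ENNReal.toReal_ofReal (lam_nonneg hpos _)] at this
    linarith
  have key4 : ∀ i, p (i + 2) ≤ b i := by
    intro i
    have hsub : F (i + 2) ⊆ V (i + 1) := by
      intro x hx
      simp only [hF, mem_setOf_eq] at hx
      simp only [hV, mem_setOf_eq]
      push_cast at hx ⊢; nlinarith
    have hb2 : ENNReal.ofReal (p (i + 2)) ≤ μ (V (i + 1)) :=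
      le_measure_open hpos (hVo (i + 1)) (hFc (i + 2)) hsub
    have h2 := ENNReal.toReal_mono (measure_ne_top μ _) hb2
    rw [ENNReal.toReal_ofReal (lam_nonneg hpos _)] at h2
    have h3 : (μ (V (i + 1))).toReal ≤ b i := by
      refine measureReal_le_int (h0 i) (hVo (i + 1)).measurableSet fun x hx => ?_
      have : ((i : ℝ) + 1) * δ ≤ g x := by
        simp only [hV, mem_setOf_eq] at hx; push_cast at hx; linarith
      rw [heq1 i x this]
    linarith
  have hptwise : ∀ x, g x = δ * ∑ i ∈ Finset.range n, h i x := by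
    intro x
    exact (stmt13_clamp_sum hδ n (g x) (hg x) (hgle x)).symm
  have hId : g = δ • ∑ i ∈ Finset.range n, h i := by
    ext x
    rw [hptwise x]
    simp [ContinuousMap.sum_apply]
  have ΛG : Λ g = δ * ∑ i ∈ Finset.range n, a i := by
    rw [hId, _root_.map_smul, map_sum]; simp [ha, smul_eq_mul]
  have IG : ∫ x, g x ∂μ = δ * ∑ i ∈ Finset.range n, b i := by
    have : (fun x => g x) = fun x => δ * ∑ i ∈ Finset.range n, h i x := funext hptwise
    rw [this, integral_const_mul, integral_finset_sum _ fun i _ => integrable_cm μ (h i)]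
  have hS1 : ∑ i ∈ Finset.range n, p (i + 1) ≤ ∑ i ∈ Finset.range n, a i :=
    Finset.sum_le_sum fun i _ => key1 i
  have hS2 : ∑ i ∈ Finset.range n, a i ≤ ∑ i ∈ Finset.range n, p i :=
    Finset.sum_le_sum fun i _ => key2 i
  have hS3 : ∑ i ∈ Finset.range n, b i ≤ ∑ i ∈ Finset.range n, p i :=
    Finset.sum_le_sum fun i _ => key3 i
  have hS4 : ∑ i ∈ Finset.range n, p (i + 2) ≤ ∑ i ∈ Finset.range n, b i :=
    Finset.sum_le_sum fun i _ => key4 i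
  have hT1 : ∑ i ∈ Finset.range n, p i - ∑ i ∈ Finset.range n, p (i + 1)
      = p 0 - p n := by
    rw [← Finset.sum_sub_distrib]
    exact Finset.sum_range_sub' p n
  have hT2 : ∑ i ∈ Finset.range n, p (i + 1) - ∑ i ∈ Finset.range n, p (i + 2)
      = p 1 - p (n + 1) := by
    rw [← Finset.sum_sub_distrib]
    exact Finset.sum_range_sub' (fun j => p (j + 1)) n
  have hp0 : p 0 ≤ 1 := lam_le_one hpos hone _
  have hp1 : p 1 ≤ 1 := lam_le_one hpos hone _
  have hpn : 0 ≤ p n := lam_nonneg hpos _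
  have hpn1 : 0 ≤ p (n + 1) := lam_nonneg hpos _
  rw [abs_le]
  constructor
  · nlinarith
  · nlinarith

theorem exists_riesz_measure (hpos : ∀ g : C(K, ℝ), (∀ x, 0 ≤ g x) → 0 ≤ Λ g)
    (hone : Λ 1 = 1) :
    ∃ μ : Measure K, IsProbabilityMeasure μ ∧
      ∀ g : C(K, ℝ), (∀ x, 0 ≤ g x) → ∫ x, g x ∂μ = Λ g :=
  ⟨(rieszCon Λ hpos).measure, ⟨measure_univ_eq_one hpos hone⟩,
    fun g hg => integral_eq_lam hpos hone g hg⟩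

end stmt13

end RMK

/-- A nonempty closed `L ⊆ K` is a center of attraction of `(K, φ)` iff every
`f ∈ C(K)` vanishing on `L` satisfies `∫ |f| dμ = 0` for all `φ`-invariant probability
measures `μ`. -/
theorem stmt13 {K : Type} [TopologicalSpace K] [CompactSpace K] [T2Space K]
    [TopologicalSpace.MetrizableSpace K] [MeasurableSpace K] [BorelSpace K]
    (φ : K → K) (hφ : Continuous φ)
    (L : Set K) (hne : L.Nonempty) (hcl : IsClosed L) :
    (∀ U : Set K, IsOpen U → L ⊆ U → ∀ x : K,
        Tendsto
          (fun N : ℕ =>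
            (((Finset.range N).filter (fun n => φ^[n] x ∈ U)).card : ℝ) / (N : ℝ))
          atTop (nhds (1 : ℝ))) ↔
      ∀ f : C(K, ℝ), (∀ x ∈ L, f x = 0) →
        ∀ μ : Measure K, IsProbabilityMeasure μ → μ.map φ = μ →
          ∫ x, |f x| ∂μ = 0 := by
  have hφm : Measurable φ := hφ.measurable
  constructor
  · -- forward direction
    intro hL f hfL μ hμp hμinv
    have hiter : ∀ n : ℕ, μ.map (φ^[n]) = μ := by
      intro n
      induction n with
      | zero => simp [Measure.map_id]
      | succ n ih =>
        rw [Function.iterate_succ',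
          ← Measure.map_map hφm (hφ.iterate n).measurable, ih, hμinv]
    have hpre : ∀ (n : ℕ) (V : Set K), MeasurableSet V → μ (φ^[n] ⁻¹' V) = μ V := by
      intro n V hV
      conv_rhs => rw [← hiter n]
      rw [Measure.map_apply (hφ.iterate n).measurable hV]
    -- show the integral is ≤ ε for every ε > 0
    have hmain : ∀ ε : ℝ, 0 < ε → ∫ x, |f x| ∂μ ≤ ε := by
      intro ε hε
      set U : Set K := {y | |f y| < ε} with hUdef
      have hUo : IsOpen U := isOpen_lt f.continuous.abs continuous_const
      have hLU : L ⊆ U := by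
        intro y hy
        simp only [hUdef, Set.mem_setOf_eq, hfL y hy, abs_zero]
        exact hε
      -- the Birkhoff averages
      set A : ℕ → K → ℝ := fun N y =>
        (((Finset.range N).filter (fun n => φ^[n] y ∈ U)).card : ℝ) / (N : ℝ) with hA
      have hAeq : ∀ (N : ℕ) (y : K),
          A N y = (N : ℝ)⁻¹ * ∑ n ∈ Finset.range N,
            (if y ∈ φ^[n] ⁻¹' U then (1 : ℝ) else 0) := by
        intro N y
        have : (((Finset.range N).filter (fun n => φ^[n] y ∈ U)).card : ℝ)
            = ∑ n ∈ Finset.range N, (if y ∈ φ^[n] ⁻¹' U then (1 : ℝ) else 0) := by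
          rw [Finset.card_filter]
          push_cast
          exact Finset.sum_congr rfl fun n _ => by simp [Set.mem_preimage]
        rw [hA]; simp only [this]; ring
      have hAint : ∀ N : ℕ, 1 ≤ N → ∫ y, A N y ∂μ = (μ U).toReal := by
        intro N hN
        have hterm : ∀ n : ℕ, ∫ y, (if y ∈ φ^[n] ⁻¹' U then (1 : ℝ) else 0) ∂μ
            = (μ U).toReal := by
          intro n
          have hms : MeasurableSet (φ^[n] ⁻¹' U) :=
            (hφ.iterate n).measurable hUo.measurableSet
          have : (fun y => if y ∈ φ^[n] ⁻¹' U then (1 : ℝ) else 0)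
              = (φ^[n] ⁻¹' U).indicator (fun _ => (1 : ℝ)) := by
            ext y; simp [Set.indicator_apply]
          rw [this, integral_indicator_const (1 : ℝ) hms, measureReal_def, hpre n U hUo.measurableSet]
          simp
        have hintg : ∀ n : ℕ, Integrable
            (fun y => if y ∈ φ^[n] ⁻¹' U then (1 : ℝ) else 0) μ := by
          intro n
          have hms : MeasurableSet (φ^[n] ⁻¹' U) :=
            (hφ.iterate n).measurable hUo.measurableSet
          have : (fun y => if y ∈ φ^[n] ⁻¹' U then (1 : ℝ) else 0)
              = (φ^[n] ⁻¹' U).indicator (fun _ => (1 : ℝ)) := by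
            ext y; simp [Set.indicator_apply]
          rw [this]
          exact (integrable_const 1).indicator hms
        have : ∫ y, A N y ∂μ
            = (N : ℝ)⁻¹ * ∑ n ∈ Finset.range N,
              ∫ y, (if y ∈ φ^[n] ⁻¹' U then (1 : ℝ) else 0) ∂μ := by
          simp only [hAeq]
          rw [integral_const_mul, integral_finset_sum _ fun n _ => hintg n]
        rw [this, Finset.sum_congr rfl fun n _ => hterm n, Finset.sum_const,
          Finset.card_range, nsmul_eq_mul]
        have hN0 : (N : ℝ) ≠ 0 := by positivity
        field_simp
      -- dominated convergence
      have hAmeas : ∀ N : ℕ, AEStronglyMeasurable (A N) μ := by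
        intro N
        have : Measurable (A N) := by
          have : A N = fun y => (N : ℝ)⁻¹ * ∑ n ∈ Finset.range N,
              (if y ∈ φ^[n] ⁻¹' U then (1 : ℝ) else 0) := funext (hAeq N)
          rw [this]
          refine (Finset.measurable_sum _ fun n _ => ?_).const_mul _
          exact Measurable.ite ((hφ.iterate n).measurable hUo.measurableSet)
            measurable_const measurable_const
        exact this.aestronglyMeasurable
      have hAbd : ∀ N : ℕ, ∀ᵐ y ∂μ, ‖A N y‖ ≤ (1 : ℝ) := by
        intro N
        refine Filter.Eventually.of_forall fun y => ?_
        rw [hA]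
        have h1 : (((Finset.range N).filter (fun n => φ^[n] y ∈ U)).card : ℝ)
            ≤ (N : ℝ) := by
          exact_mod_cast le_trans (Finset.card_filter_le _ _)
            (le_of_eq (Finset.card_range N))
        have h0 : (0 : ℝ) ≤ (((Finset.range N).filter
            (fun n => φ^[n] y ∈ U)).card : ℝ) := by positivity
        rcases Nat.eq_zero_or_pos N with hN | hN
        · simp [hN]
        · have hNpos : (0 : ℝ) < N := by exact_mod_cast hN
          rw [Real.norm_eq_abs, abs_div, abs_of_nonneg h0, abs_of_nonneg hNpos.le,
            div_le_one hNpos]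
          exact h1
      have hAlim : ∀ᵐ y ∂μ, Tendsto (fun N => A N y) atTop (nhds (1 : ℝ)) :=
        Filter.Eventually.of_forall fun y => hL U hUo hLU y
      have hDCT := MeasureTheory.tendsto_integral_of_dominated_convergence
        (fun _ => (1 : ℝ)) hAmeas (integrable_const 1) hAbd hAlim
      have hconst : ∫ _, (1 : ℝ) ∂μ = 1 := by simp
      rw [hconst] at hDCT
      have hUone : (μ U).toReal = 1 := by
        have hev : (fun N => ∫ y, A N y ∂μ) =ᶠ[atTop] fun _ => (μ U).toReal := by
          filter_upwards [Filter.eventually_ge_atTop 1] with N hN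
          exact hAint N hN
        exact tendsto_nhds_unique tendsto_const_nhds (Filter.Tendsto.congr' hev hDCT)
      have hUfull : μ U = 1 := (ENNReal.toReal_eq_one_iff (μ U)).mp hUone
      have hcompl : μ Uᶜ = 0 := by
        have := measure_compl hUo.measurableSet (measure_ne_top μ U)
        rw [hUfull, measure_univ] at this
        simpa using this
      have hae : ∀ᵐ y ∂μ, |f y| ≤ ε := by
        have hsub : {y | ¬ |f y| ≤ ε} ⊆ Uᶜ := by
          intro y hy
          simp only [Set.mem_setOf_eq, not_le] at hy
          simp only [Set.mem_compl_iff, hUdef, Set.mem_setOf_eq, not_lt]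
          exact hy.le
        exact measure_mono_null hsub hcompl
      calc ∫ x, |f x| ∂μ ≤ ∫ _, ε ∂μ :=
            integral_mono_ae ((stmt13.integrable_cm μ f).abs) (integrable_const ε) hae
        _ = ε := by simp
    have hnn : 0 ≤ ∫ x, |f x| ∂μ := integral_nonneg fun x => abs_nonneg _
    by_contra hzero
    have hposI : 0 < ∫ x, |f x| ∂μ := lt_of_le_of_ne hnn (Ne.symm hzero)
    have := hmain ((∫ x, |f x| ∂μ) / 2) (by linarith)
    linarith
  · -- reverse direction
    intro H U hU hLU x
    obtain ⟨f₀, hf₀L, hf₀Uc, hf₀01⟩ :=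
      exists_continuous_zero_one_of_isClosed hcl hU.isClosed_compl
        (Set.disjoint_left.mpr fun a haL haUc => haUc (hLU haL))
    set φc : C(K, K) := ⟨φ, hφ⟩ with hφc
    -- the sequence of empirical functionals
    have hbound : ∀ (N : ℕ) (g : C(K, ℝ)),
        |(N : ℝ)⁻¹ * ∑ n ∈ Finset.range N, g (φ^[n] x)| ≤ 1 * ‖g‖ := by
      intro N g
      rcases Nat.eq_zero_or_pos N with hN | hN
      · simp [hN, norm_nonneg]
      · have h1 : |∑ n ∈ Finset.range N, g (φ^[n] x)| ≤ (N : ℝ) * ‖g‖ := by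
          calc |∑ n ∈ Finset.range N, g (φ^[n] x)|
              ≤ ∑ n ∈ Finset.range N, |g (φ^[n] x)| := Finset.abs_sum_le_sum_abs _ _
            _ ≤ ∑ n ∈ Finset.range N, ‖g‖ := by
                refine Finset.sum_le_sum fun n _ => ?_
                rw [← Real.norm_eq_abs]
                exact g.norm_coe_le_norm _
            _ = (N : ℝ) * ‖g‖ := by
                rw [Finset.sum_const, Finset.card_range, nsmul_eq_mul]
        have hNpos : (0 : ℝ) < N := by exact_mod_cast hN
        rw [abs_mul, abs_inv, Nat.abs_cast, one_mul]
        calc (N : ℝ)⁻¹ * |∑ n ∈ Finset.range N, g (φ^[n] x)|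
            ≤ (N : ℝ)⁻¹ * ((N : ℝ) * ‖g‖) :=
              mul_le_mul_of_nonneg_left h1 (by positivity)
          _ = ‖g‖ := by field_simp
    set ℓ : ℕ → WeakDual ℝ C(K, ℝ) := fun N =>
      LinearMap.mkContinuous
        { toFun := fun g => (N : ℝ)⁻¹ * ∑ n ∈ Finset.range N, g (φ^[n] x)
          map_add' := by
            intro g h
            simp only [ContinuousMap.add_apply, Finset.sum_add_distrib]
            ring
          map_smul' := by
            intro c g
            simp only [ContinuousMap.smul_apply, smul_eq_mul, RingHom.id_apply]
            rw [← Finset.mul_sum]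
            ring }
        1 (fun g => by
          simpa [Real.norm_eq_abs, abs_mul, abs_inv, Nat.abs_cast]
            using hbound N g) with hℓ
    have hℓapp : ∀ (N : ℕ) (g : C(K, ℝ)),
        ℓ N g = (N : ℝ)⁻¹ * ∑ n ∈ Finset.range N, g (φ^[n] x) := fun N g => rfl
    set S : ℕ → ℝ := fun N => ℓ N f₀ with hS
    have hSnn : ∀ N, 0 ≤ S N := by
      intro N
      rw [hS]
      simp only [hℓapp]
      have : (0:ℝ) ≤ ∑ n ∈ Finset.range N, f₀ (φ^[n] x) :=
        Finset.sum_nonneg fun n _ => (hf₀01 _).1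
      positivity
    -- main claim : S → 0
    have hS0 : Tendsto S atTop (nhds (0 : ℝ)) := by
      by_contra hcon
      rw [Metric.tendsto_atTop] at hcon
      push_neg at hcon
      obtain ⟨ε, hε, hcon⟩ := hcon
      have hfreq : ∃ᶠ N in atTop, ε ≤ S N := by
        rw [Filter.frequently_atTop]
        intro N₀
        obtain ⟨n, hn, hd⟩ := hcon N₀
        refine ⟨n, hn, ?_⟩
        rwa [Real.dist_eq, sub_zero, abs_of_nonneg (hSnn n)] at hd
      set F₀ : Filter ℕ := atTop ⊓ Filter.principal {N | ε ≤ S N} with hF₀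
      haveI : F₀.NeBot := Filter.frequently_iff_neBot.mp hfreq
      have hball : ∀ N, ℓ N ∈
          WeakDual.toStrongDual ⁻¹' Metric.closedBall 0 1 := by
        intro N
        simp only [Set.mem_preimage, Metric.mem_closedBall, dist_zero_right]
        exact LinearMap.mkContinuous_norm_le _ zero_le_one (fun g => by
          simpa [hℓapp, Real.norm_eq_abs, abs_mul, abs_inv, Nat.abs_cast]
            using hbound N g)
      have hmap_le : Filter.map ℓ F₀ ≤
          Filter.principal (WeakDual.toStrongDual ⁻¹' Metric.closedBall 0 1) := by
        rw [Filter.le_principal_iff, Filter.mem_map]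
        exact Filter.univ_mem' hball
      obtain ⟨Λ, hΛmem, hΛcl⟩ :=
        (WeakDual.isCompact_closedBall (𝕜 := ℝ) (E := C(K, ℝ)) 0 1).exists_clusterPt
          hmap_le
      -- extraction principles for cluster points
      have hev_eq : ∀ (T : WeakDual ℝ C(K, ℝ) → ℝ), Continuous T → ∀ c : ℝ,
          Tendsto (fun N => T (ℓ N)) F₀ (nhds c) → T Λ = c := by
        intro T hT c hTc
        have h1 : ClusterPt (T Λ) (Filter.map (fun N => T (ℓ N)) F₀) := by
          have := hΛcl.map hT.continuousAt
            (show Tendsto T (Filter.map ℓ F₀) (Filter.map (fun N => T (ℓ N)) F₀) by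
              rw [Filter.tendsto_map'_iff]; exact Filter.tendsto_map)
          exact this
        exact eq_of_nhds_neBot (h1.mono hTc)
      have hev_mem : ∀ (T : WeakDual ℝ C(K, ℝ) → ℝ), Continuous T →
          ∀ s : Set ℝ, IsClosed s → (∀ᶠ N in F₀, T (ℓ N) ∈ s) → T Λ ∈ s := by
        intro T hT s hs hmem
        have h1 : ClusterPt (T Λ) (Filter.map (fun N => T (ℓ N)) F₀) := by
          have := hΛcl.map hT.continuousAt
            (show Tendsto T (Filter.map ℓ F₀) (Filter.map (fun N => T (ℓ N)) F₀) by
              rw [Filter.tendsto_map'_iff]; exact Filter.tendsto_map)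
          exact this
        have h2 : ClusterPt (T Λ) (Filter.principal s) :=
          h1.mono (Filter.le_principal_iff.mpr (Filter.mem_map.mpr hmem))
        rw [← hs.closure_eq]
        exact mem_closure_iff_clusterPt.mpr h2
      have hF₀le : F₀ ≤ atTop := inf_le_left
      -- Λ 1 = 1
      have hone : Λ (1 : C(K, ℝ)) = 1 := by
        refine hev_eq _ (WeakDual.eval_continuous _) 1 ?_
        have hev : ∀ᶠ N in F₀, ℓ N (1 : C(K, ℝ)) = 1 := by
          filter_upwards [hF₀le (Filter.eventually_ge_atTop 1)] with N hN
          rw [hℓapp]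
          simp only [ContinuousMap.one_apply, Finset.sum_const, Finset.card_range,
            nsmul_eq_mul, mul_one]
          have hN0 : (N : ℝ) ≠ 0 := by positivity
          field_simp
        exact Tendsto.congr' (hev.mono fun N h => h.symm) tendsto_const_nhds
      -- positivity
      have hpos : ∀ g : C(K, ℝ), (∀ y, 0 ≤ g y) → 0 ≤ Λ g := by
        intro g hg
        have := hev_mem _ (WeakDual.eval_continuous g) (Set.Ici 0) isClosed_Ici ?_
        · exact this
        · refine Filter.Eventually.of_forall fun N => ?_
          rw [hℓapp]
          have h1 : (0:ℝ) ≤ ∑ n ∈ Finset.range N, g (φ^[n] x) :=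
            Finset.sum_nonneg fun n _ => hg _
          have h2 : (0:ℝ) ≤ (N : ℝ)⁻¹ := by positivity
          exact Set.mem_Ici.mpr (mul_nonneg h2 h1)
      -- invariance
      have hinv : ∀ g : C(K, ℝ), Λ (g.comp φc) = Λ g := by
        intro g
        have hT : Continuous fun W : WeakDual ℝ C(K, ℝ) => W (g.comp φc) - W g :=
          (WeakDual.eval_continuous _).sub (WeakDual.eval_continuous _)
        have hdiff : ∀ N : ℕ, ℓ N (g.comp φc) - ℓ N g
            = (N : ℝ)⁻¹ * (g (φ^[N] x) - g (φ^[0] x)) := by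
          intro N
          rw [hℓapp, hℓapp]
          have hc : ∀ n : ℕ, (g.comp φc) (φ^[n] x) = g (φ^[n+1] x) := by
            intro n
            simp only [ContinuousMap.comp_apply, hφc, ContinuousMap.coe_mk]
            rw [Function.iterate_succ_apply']
          have hsum : ∑ n ∈ Finset.range N, (g.comp φc) (φ^[n] x)
              = ∑ n ∈ Finset.range N, g (φ^[n+1] x) :=
            Finset.sum_congr rfl fun n _ => hc n
          rw [hsum, ← mul_sub, ← Finset.sum_sub_distrib]
          rw [Finset.sum_range_sub fun n => g (φ^[n] x)]
        have htend : Tendsto (fun N => ℓ N (g.comp φc) - ℓ N g) atTop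
            (nhds (0 : ℝ)) := by
          refine squeeze_zero_norm (fun N => ?_)
            (tendsto_const_div_atTop_nhds_zero_nat (2 * ‖g‖))
          rw [hdiff N, Real.norm_eq_abs, abs_mul, abs_inv, Nat.abs_cast]
          rcases Nat.eq_zero_or_pos N with hN | hN
          · simp [hN]
          · have hNpos : (0 : ℝ) < N := by exact_mod_cast hN
            have h1 : |g (φ^[N] x) - g (φ^[0] x)| ≤ 2 * ‖g‖ := by
              have ha : |g (φ^[N] x)| ≤ ‖g‖ := by
                rw [← Real.norm_eq_abs]; exact g.norm_coe_le_norm _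
              have hb : |g (φ^[0] x)| ≤ ‖g‖ := by
                rw [← Real.norm_eq_abs]; exact g.norm_coe_le_norm _
              calc |g (φ^[N] x) - g (φ^[0] x)| ≤ |g (φ^[N] x)| + |g (φ^[0] x)| :=
                    abs_sub _ _
                _ ≤ 2 * ‖g‖ := by linarith
            rw [div_eq_inv_mul]
            exact mul_le_mul_of_nonneg_left h1 (by positivity)
        have := hev_eq _ hT 0 (htend.mono_left hF₀le)
        linarith [this]
      -- lower bound at f₀
      have hf₀ε : ε ≤ Λ f₀ := by
        have := hev_mem _ (WeakDual.eval_continuous f₀) (Set.Ici ε) isClosed_Ici ?_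
        · exact this
        · have hmem : {N | ε ≤ S N} ∈ F₀ :=
            Filter.mem_inf_of_right (Filter.mem_principal_self _)
          filter_upwards [hmem] with N hN
          exact hN
      -- build the invariant measure
      obtain ⟨μ, hμp, hμrep⟩ := stmt13.exists_riesz_measure hpos hone
      haveI := hμp
      have hμinv : μ.map φ = μ := by
        haveI : IsProbabilityMeasure (μ.map φ) :=
          Measure.isProbabilityMeasure_map hφm.aemeasurable
        refine ext_of_forall_lintegral_eq_of_IsFiniteMeasure fun q => ?_
        set cq : C(K, ℝ) := ⟨fun y => (q y : ℝ), NNReal.continuous_coe.comp q.continuous⟩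
          with hcq
        have hqm : Measurable fun y => (q y : ENNReal) :=
          (ENNReal.continuous_coe.comp q.continuous).measurable
        rw [lintegral_map hqm hφm]
        have h1 : ∫⁻ y, (q (φ y) : ENNReal) ∂μ
            = ENNReal.ofReal (∫ y, ((q (φ y) : ℝ)) ∂μ) := by
          rw [← MeasureTheory.lintegral_coe_eq_integral (fun y => q (φ y))]
          exact stmt13.integrable_cm μ (cq.comp φc)
        have h2 : ∫⁻ y, (q y : ENNReal) ∂μ
            = ENNReal.ofReal (∫ y, ((q y : ℝ)) ∂μ) := by
          rw [← MeasureTheory.lintegral_coe_eq_integral (fun y => q y)]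
          exact stmt13.integrable_cm μ cq
        rw [h1, h2]
        congr 1
        have e1 : ∫ y, ((q (φ y) : ℝ)) ∂μ = Λ (cq.comp φc) :=
          hμrep (cq.comp φc) fun y => (q (φ y)).2
        have e2 : ∫ y, ((q y : ℝ)) ∂μ = Λ cq := hμrep cq fun y => (q y).2
        rw [e1, e2, hinv]
      have hzero := H f₀ (fun y hy => hf₀L hy) μ hμp hμinv
      have habs : ∫ y, |f₀ y| ∂μ = ∫ y, f₀ y ∂μ :=
        integral_congr_ae (Filter.Eventually.of_forall fun y =>
          abs_of_nonneg (hf₀01 y).1)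
      rw [habs, hμrep f₀ (fun y => (hf₀01 y).1)] at hzero
      linarith [hf₀ε, hzero, hε]
    -- conclude : Birkhoff averages of 1_U tend to 1
    have hkey : ∀ᶠ N in atTop,
        ‖(((Finset.range N).filter (fun n => φ^[n] x ∈ U)).card : ℝ) / (N : ℝ) - 1‖
          ≤ S N := by
      filter_upwards [Filter.eventually_ge_atTop 1] with N hN
      have hNpos : (0 : ℝ) < N := by exact_mod_cast hN
      set c1 : ℕ := ((Finset.range N).filter (fun n => φ^[n] x ∈ U)).card with hc1
      set c0 : ℕ := ((Finset.range N).filter (fun n => ¬ φ^[n] x ∈ U)).card with hc0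
      have hsplit : c1 + c0 = N := by
        rw [hc1, hc0, Finset.card_filter_add_card_filter_not, Finset.card_range]
      have hSl : ((c0 : ℝ)) / N ≤ S N := by
        rw [hS]
        simp only [hℓapp]
        have hsum : ((c0 : ℝ)) ≤ ∑ n ∈ Finset.range N, f₀ (φ^[n] x) := by
          have h1 : ∑ n ∈ (Finset.range N).filter (fun n => ¬ φ^[n] x ∈ U),
              f₀ (φ^[n] x) = (c0 : ℝ) := by
            have hconst : ∀ n ∈ (Finset.range N).filter (fun n => ¬ φ^[n] x ∈ U),
                f₀ (φ^[n] x) = 1 := by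
              intro n hn
              have hmemc : φ^[n] x ∈ Uᶜ := (Finset.mem_filter.mp hn).2
              simpa using hf₀Uc hmemc
            rw [Finset.sum_congr rfl hconst, Finset.sum_const, nsmul_eq_mul, mul_one, hc0]
          rw [← h1]
          refine Finset.sum_le_sum_of_subset_of_nonneg (Finset.filter_subset _ _)
            fun n _ _ => (hf₀01 _).1
        rw [div_eq_inv_mul]
        exact mul_le_mul_of_nonneg_left hsum (by positivity)
      have hc1leN : (c1 : ℝ) ≤ N := by
        exact_mod_cast le_trans (Finset.card_filter_le _ _) (le_of_eq (Finset.card_range N))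
      have heq : (c1 : ℝ) / N - 1 = -((c0 : ℝ) / N) := by
        have hsum : (c1 : ℝ) + c0 = N := by exact_mod_cast hsplit
        field_simp
        linarith
      rw [Real.norm_eq_abs, heq, abs_neg, abs_of_nonneg (by positivity)]
      exact hSl
    have htend0 : Tendsto (fun N : ℕ =>
        (((Finset.range N).filter (fun n => φ^[n] x ∈ U)).card : ℝ) / (N : ℝ) - 1)
        atTop (nhds 0) :=
      squeeze_zero_norm' hkey hS0
    have := htend0.add_const 1
    simpa using this
end

section
/- Let K be a compact Hausdorff space, S a right amenable semigroup of Markov operators on C(K), μ an S-invariant probability measure, and L ⊆ K a self-supporting closed set. Then the indicator function 1_L is a fixed point of every induced operator S_μ on L¹(K,μ). -/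
open MeasureTheory Filter
open scoped NNReal ENNReal Classical Topology

lemma cm_integrable {K : Type} [TopologicalSpace K] [CompactSpace K]
    [MeasurableSpace K] [BorelSpace K] (μ : MeasureTheory.Measure K)
    [MeasureTheory.IsProbabilityMeasure μ] (g : C(K, ℝ)) :
    MeasureTheory.Integrable (⇑g) μ := by
  have hcs : HasCompactSupport ⇑g := (isClosed_tsupport _).isCompact
  exact MeasureTheory.memLp_one_iff_integrable.mp
    ((map_continuous g).memLp_of_hasCompactSupport hcs)

lemma norm_toLp_sub_indicator {K : Type} [TopologicalSpace K] [CompactSpace K]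
    [MeasurableSpace K] [BorelSpace K]
    (μ : Measure K) [IsProbabilityMeasure μ]
    {L : Set K} (hLm : MeasurableSet L)
    (g : C(K, ℝ)) (hg1 : ∀ x ∈ L, g x = 1) (hg0 : ∀ x, 0 ≤ g x) :
    ‖ContinuousMap.toLp 1 μ ℝ g - indicatorConstLp 1 hLm (measure_ne_top μ L) (1 : ℝ)‖
      = ∫ x, g x ∂μ - (μ L).toReal := by
  have hae : (⇑(ContinuousMap.toLp 1 μ ℝ g
        - indicatorConstLp 1 hLm (measure_ne_top μ L) (1 : ℝ)))
      =ᵐ[μ] fun x => g x - L.indicator (fun _ => (1:ℝ)) x := by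
    filter_upwards [Lp.coeFn_sub (ContinuousMap.toLp 1 μ ℝ g)
      (indicatorConstLp 1 hLm (measure_ne_top μ L) (1 : ℝ)),
      ContinuousMap.coeFn_toLp (p := (1:ℝ≥0∞)) μ (𝕜 := ℝ) g,
      indicatorConstLp_coeFn (p := (1:ℝ≥0∞)) (hs := hLm)
        (hμs := measure_ne_top μ L) (c := (1:ℝ))] with x h1 h2 h3
    rw [h1, Pi.sub_apply, h2, h3]
  have hnonneg : ∀ x, 0 ≤ g x - L.indicator (fun _ => (1:ℝ)) x := by
    intro x
    by_cases hx : x ∈ L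
    · simp [Set.indicator_of_mem hx, hg1 x hx]
    · simp [Set.indicator_of_notMem hx, hg0 x]
  rw [L1.norm_eq_integral_norm]
  have hae2 : (fun a => ‖(⇑(ContinuousMap.toLp 1 μ ℝ g
        - indicatorConstLp 1 hLm (measure_ne_top μ L) (1 : ℝ))) a‖)
      =ᵐ[μ] fun x => g x - L.indicator (fun _ => (1:ℝ)) x :=
    hae.mono fun x hx => by dsimp only; rw [hx]; exact Real.norm_of_nonneg (hnonneg x)
  rw [integral_congr_ae hae2]
  rw [integral_sub (cm_integrable μ g)
    ((integrable_const (1:ℝ)).indicator hLm)]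
  rw [integral_indicator_const _ hLm]
  simp; rfl

/-- For any invariant probability measure `μ` and any self-supporting closed set `L`,
the indicator `1_L` is fixed by every induced operator on `L¹(K, μ)`. -/
theorem stmt15 {K : Type} [TopologicalSpace K] [CompactSpace K] [T2Space K]
    [MeasurableSpace K] [BorelSpace K]
    (𝒮 : Subsemigroup (Module.End ℝ C(K, ℝ))) (hMarkov : ∀ T ∈ 𝒮, IsMarkov T)
    (ham : RightAmenable 𝒮)
    (μ : Measure K) [IsProbabilityMeasure μ]
    (hμ : InvProb (𝒮 : Set (Module.End ℝ C(K, ℝ))) μ)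
    (L : Set K) (hL : SelfSupporting (𝒮 : Set (Module.End ℝ C(K, ℝ))) L)
    (Φ : ∀ T ∈ 𝒮, Lp ℝ 1 μ →L[ℝ] Lp ℝ 1 μ)
    (hΦ : ∀ T (hT : T ∈ 𝒮) (f : C(K, ℝ)),
      Φ T hT (ContinuousMap.toLp 1 μ ℝ f) = ContinuousMap.toLp 1 μ ℝ (T f)) :
    ∀ T (hT : T ∈ 𝒮),
      Φ T hT (indicatorConstLp 1 hL.2.1.measurableSet (measure_ne_top μ L) (1 : ℝ)) =
        indicatorConstLp 1 hL.2.1.measurableSet (measure_ne_top μ L) (1 : ℝ) := by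
  intro T hT
  classical
  haveI hreg : μ.Regular := hμ.2.1
  set ind := indicatorConstLp 1 hL.2.1.measurableSet (measure_ne_top μ L) (1 : ℝ) with hind
  set d := Φ T hT ind - ind with hd
  have key : ∀ ε : ℝ, 0 < ε → ‖d‖ ≤ (‖Φ T hT‖ + 1) * ε := by
    intro ε hε
    obtain ⟨U, hLU, hUo, hU⟩ := L.exists_isOpen_lt_add (μ := μ) (measure_ne_top μ L)
      (ENNReal.ofReal_pos.2 hε).ne'
    obtain ⟨f, hf0, hf1, hf01⟩ := exists_continuous_zero_one_of_isClosed
      (isClosed_compl_iff.2 hUo) hL.2.1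
      (Set.disjoint_left.mpr (fun {x} hxc hxL => hxc (hLU hxL)))
    have hfL : ∀ x ∈ L, f x = 1 := fun x hx => hf1 hx
    have hfnn : ∀ x, 0 ≤ f x := fun x => (hf01 x).1
    -- ∫ f ≤ μ U
    have hfU : ∫ x, f x ∂μ ≤ (μ U).toReal := by
      have hle : ∀ x, f x ≤ U.indicator (fun _ => (1:ℝ)) x := by
        intro x
        by_cases hx : x ∈ U
        · simpa [Set.indicator_of_mem hx] using (hf01 x).2
        · simp [Set.indicator_of_notMem hx, hf0 hx]
      calc ∫ x, f x ∂μ ≤ ∫ x, U.indicator (fun _ => (1:ℝ)) x ∂μ :=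
            integral_mono (cm_integrable μ f)
              ((integrable_const (1:ℝ)).indicator hUo.measurableSet) hle
        _ = (μ U).toReal := by rw [integral_indicator_const _ hUo.measurableSet]; simp; rfl
    have hμU : (μ U).toReal ≤ (μ L).toReal + ε := by
      have h1 : μ U ≤ μ L + ENNReal.ofReal ε := hU.le
      have h2 : (μ U).toReal ≤ (μ L + ENNReal.ofReal ε).toReal :=
        ENNReal.toReal_mono (by finiteness) h1
      rwa [ENNReal.toReal_add (measure_ne_top μ L) ENNReal.ofReal_ne_top,
        ENNReal.toReal_ofReal hε.le] at h2
    have hA : ∫ x, f x ∂μ - (μ L).toReal ≤ ε := by linarith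
    -- T f properties
    have hTf1 : ∀ x ∈ L, (T f) x = 1 := by
      intro x hx
      have hvan : ∀ y ∈ L, ((1 : C(K, ℝ)) - f) y = 0 := by
        intro y hy
        simp [hfL y hy]
      have h0 : (T ((1 : C(K, ℝ)) - f)) x = 0 := hL.2.2 T hT x hx _ hvan
      have hmap : T ((1 : C(K, ℝ)) - f) = T 1 - T f := map_sub T 1 f
      rw [hmap, (hMarkov T hT).2] at h0
      have h0' : 1 - (T f) x = 0 := by simpa using h0
      linarith
    have hTfnn : ∀ x, 0 ≤ (T f) x := by
      intro x
      have : (0 : C(K, ℝ)) ≤ T f := (hMarkov T hT).1 f (by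
        intro y; simpa using hfnn y)
      simpa using this x
    have hTfint : ∫ x, (T f) x ∂μ = ∫ x, f x ∂μ := hμ.2.2 T hT f
    -- norm estimates
    have h1 : ‖ContinuousMap.toLp 1 μ ℝ f - ind‖ ≤ ε := by
      rw [hind, norm_toLp_sub_indicator μ hL.2.1.measurableSet f hfL hfnn]
      exact hA
    have h2 : ‖ContinuousMap.toLp 1 μ ℝ (T f) - ind‖ ≤ ε := by
      rw [hind, norm_toLp_sub_indicator μ hL.2.1.measurableSet (T f) hTf1 hTfnn]
      rw [hTfint]; exact hA
    have hΦf := hΦ T hT f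
    calc ‖d‖ = ‖Φ T hT (ind - ContinuousMap.toLp 1 μ ℝ f)
          + (ContinuousMap.toLp 1 μ ℝ (T f) - ind)‖ := by
          rw [hd, map_sub, hΦf]; abel
      _ ≤ ‖Φ T hT (ind - ContinuousMap.toLp 1 μ ℝ f)‖
          + ‖ContinuousMap.toLp 1 μ ℝ (T f) - ind‖ := norm_add_le _ _
      _ ≤ ‖Φ T hT‖ * ‖ind - ContinuousMap.toLp 1 μ ℝ f‖ + ε :=
          add_le_add ((Φ T hT).le_opNorm _) h2
      _ ≤ ‖Φ T hT‖ * ε + ε := by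
          have h1' : ‖ind - ContinuousMap.toLp 1 μ ℝ f‖ ≤ ε := by
            rw [norm_sub_rev]; exact h1
          nlinarith [norm_nonneg (Φ T hT)]
      _ = (‖Φ T hT‖ + 1) * ε := by ring
  have hd0 : ‖d‖ ≤ 0 := by
    by_contra hc
    push_neg at hc
    have hpos : (0:ℝ) < ‖Φ T hT‖ + 1 := by positivity
    have := key (‖d‖ / (2 * (‖Φ T hT‖ + 1))) (by positivity)
    rw [div_eq_mul_inv] at this
    have heq : (‖Φ T hT‖ + 1) * (‖d‖ * (2 * (‖Φ T hT‖ + 1))⁻¹) = ‖d‖ / 2 := by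
      field_simp
    rw [heq] at this
    linarith
  have : d = 0 := by
    have := norm_le_zero_iff.mp hd0
    exact this
  exact sub_eq_zero.mp this
end

section
/- Let K be a compact Hausdorff space and S a right amenable semigroup of Markov operators on C(K). The map A ↦ hull(ker(A)) on subsets of the primitive spectrum Prim(S), where ker(A) = ⋂_{p∈A} p and hull(I) = {p ∈ Prim(S) : I ⊆ p}, is a Kuratowski closure operator; in particular hull(ker(A₁ ∪ A₂)) = hull(ker(A₁)) ∪ hull(ker(A₂)). -/
open MeasureTheory Filter
open scoped NNReal ENNReal Classical Topology

/-- The hull of a set of functions: all primitive `𝒮`-ideals containing it. -/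
def hullOf {K : Type} [TopologicalSpace K] [CompactSpace K] [MeasurableSpace K]
    (𝒮 : Set (Module.End ℝ C(K, ℝ))) (I : Set C(K, ℝ)) : Set (Set C(K, ℝ)) :=
  {p : Set C(K, ℝ) | IsPrimitive 𝒮 p ∧ I ⊆ p}

set_option linter.unusedSectionVars false
set_option maxHeartbeats 1000000

section Support
variable {K : Type} [TopologicalSpace K] [CompactSpace K] [T2Space K]
  [MeasurableSpace K] [BorelSpace K]

/-- support of a measure -/
def msupp (μ : Measure K) : Set K := {x | ∀ U : Set K, IsOpen U → x ∈ U → 0 < μ U}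

lemma isClosed_msupp (μ : Measure K) : IsClosed (msupp μ) := by
  rw [← isOpen_compl_iff]
  rw [isOpen_iff_forall_mem_open]
  intro x hx
  simp only [msupp, Set.mem_compl_iff, Set.mem_setOf_eq, not_forall] at hx
  obtain ⟨U, hU, hxU, hμU⟩ := hx
  refine ⟨U, fun y hy => ?_, hU, hxU⟩
  simp only [Set.mem_compl_iff, msupp, Set.mem_setOf_eq, not_forall]
  exact ⟨U, hU, hy, hμU⟩

lemma msupp_compl_null (μ : Measure K) [μ.Regular] : μ (msupp μ)ᶜ = 0 := by
  have hopen : IsOpen (msupp μ)ᶜ := (isClosed_msupp μ).isOpen_compl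
  by_contra h
  have hpos : 0 < μ (msupp μ)ᶜ := pos_iff_ne_zero.mpr h
  obtain ⟨C, hCsub, hCcomp, hCpos⟩ :=
    Measure.Regular.innerRegular (μ := μ) hopen 0 hpos
  -- C compact subset of complement of support; cover by null open sets
  have hcover : ∀ x ∈ C, ∃ U : Set K, IsOpen U ∧ x ∈ U ∧ μ U = 0 := by
    intro x hx
    have := hCsub hx
    simp only [Set.mem_compl_iff, msupp, Set.mem_setOf_eq, not_forall] at this
    obtain ⟨U, hU, hxU, hμU⟩ := this
    exact ⟨U, hU, hxU, by simpa using not_lt.mp hμU⟩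
  choose U hUopen hxU hUnull using hcover
  obtain ⟨s, hs⟩ := hCcomp.elim_finite_subcover (fun x : C => U x x.2)
    (fun x => hUopen x x.2) (fun x hx => Set.mem_iUnion.mpr ⟨⟨x, hx⟩, hxU x hx⟩)
  have : μ C = 0 := by
    refine measure_mono_null hs ?_
    exact (measure_biUnion_null_iff s.countable_toSet).mpr (fun x _ => hUnull x x.2)
  simp [this] at hCpos

lemma cont_integrable (μ : Measure K) [IsFiniteMeasure μ] (f : C(K,ℝ)) :
    Integrable (fun x => f x) μ :=
  f.continuous.integrable_of_hasCompactSupport (HasCompactSupport.of_compactSpace _)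

/-- integral of |f| vanishes iff f vanishes on the support -/
lemma absint_eq_zero_iff (μ : Measure K) [IsProbabilityMeasure μ] [μ.Regular] (f : C(K,ℝ)) :
    (∫ x, |f x| ∂μ = 0) ↔ ∀ x ∈ msupp μ, f x = 0 := by
  have hint : Integrable (fun x => |f x|) μ := (cont_integrable μ f).abs
  have h0 : (∫ x, |f x| ∂μ = 0) ↔ (fun x => |f x|) =ᵐ[μ] 0 := by
    rw [integral_eq_zero_iff_of_nonneg (fun x => abs_nonneg _) hint]
  rw [h0]
  constructor
  · intro h x hx
    by_contra hfx
    have hopen : IsOpen {y | f y ≠ 0} := isOpen_ne.preimage f.continuous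
    have hpos := hx _ hopen hfx
    have : μ {y | f y ≠ 0} = 0 := by
      have := h
      rw [Filter.EventuallyEq, ae_iff] at this
      simpa only [Pi.zero_apply, abs_eq_zero] using this
    simp [this] at hpos
  · intro h
    rw [Filter.EventuallyEq, ae_iff]
    refine measure_mono_null ?_ (msupp_compl_null μ)
    intro y hy
    simp only [Pi.zero_apply, abs_eq_zero, Set.mem_setOf_eq] at hy
    exact fun hmem => hy (h y hmem)


end Support

section L3
variable {K : Type} [TopologicalSpace K] [CompactSpace K] [T2Space K]
  [MeasurableSpace K] [BorelSpace K]

/-- zero set of a set of functions -/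
def zeroSet (p : Set C(K,ℝ)) : Set K := {x | ∀ f ∈ p, f x = 0}

lemma isClosed_zeroSet (p : Set C(K,ℝ)) : IsClosed (zeroSet p) := by
  have : zeroSet p = ⋂ f ∈ p, (f ⁻¹' {0} : Set K) := by
    ext x; simp [zeroSet]
  rw [this]
  exact isClosed_biInter fun f _ => (isClosed_singleton).preimage f.continuous

lemma mem_absKernel_iff (μ : Measure K) [IsProbabilityMeasure μ] [μ.Regular] (f : C(K,ℝ)) :
    f ∈ absKernel μ ↔ ∀ x ∈ msupp μ, f x = 0 := absint_eq_zero_iff μ f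

lemma zeroSet_absKernel (μ : Measure K) [IsProbabilityMeasure μ] [μ.Regular] :
    zeroSet (absKernel μ) = msupp μ := by
  apply Set.Subset.antisymm
  · intro x hx
    by_contra hxs
    simp only [msupp, Set.mem_setOf_eq, not_forall] at hxs
    obtain ⟨U, hU, hxU, hμU⟩ := hxs
    have hμU0 : μ U = 0 := by simpa using not_lt.mp hμU
    obtain ⟨g, hg0, hg1, -⟩ := exists_continuous_zero_one_of_isClosed
      (isClosed_compl_iff.mpr hU) (isClosed_singleton (x := x))
      (by simpa [Set.disjoint_singleton_right] using hxU)
    have hg : g ∈ absKernel μ := by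
      rw [mem_absKernel_iff]
      intro y hy
      by_contra hgy
      have : y ∈ U := by
        by_contra hyU
        exact hgy (hg0 hyU)
      -- y ∈ msupp μ but μ U = 0
      have := hy U hU this
      simp [hμU0] at this
    have := hx g hg
    simp [hg1 rfl] at this
  · intro x hx f hf
    exact (mem_absKernel_iff μ f).mp hf x hx

end L3

section L4
variable {K : Type} [TopologicalSpace K] [CompactSpace K] [T2Space K]
  [MeasurableSpace K] [BorelSpace K] {𝒮 : Set (Module.End ℝ C(K, ℝ))}

/-- closed set associated to a family of primitive ideals -/
def kerSet (A : Set (Set C(K,ℝ))) : Set K := closure (⋃ p ∈ A, zeroSet p)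

lemma sInter_eq_vanishing (A : Set (Set C(K,ℝ)))
    (hA : A ⊆ {p | IsPrimitive 𝒮 p}) :
    ⋂₀ A = {f : C(K,ℝ) | ∀ x ∈ kerSet A, f x = 0} := by
  ext f
  simp only [Set.mem_sInter, Set.mem_setOf_eq]
  constructor
  · intro h x hx
    have hzero : ∀ y ∈ ⋃ p ∈ A, zeroSet p, f y = 0 := by
      intro y hy
      simp only [Set.mem_iUnion] at hy
      obtain ⟨p, hp, hyp⟩ := hy
      exact hyp f (h p hp)
    -- f vanishes on the union, hence on its closure
    have hcl : kerSet A ⊆ f ⁻¹' {0} := by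
      apply closure_minimal
      · intro y hy; simpa using hzero y hy
      · exact (isClosed_singleton).preimage f.continuous
    simpa using hcl hx
  · intro h p hp
    obtain ⟨μ, ⟨⟨hprob, hreg, hinv⟩, _⟩, rfl⟩ := hA hp
    haveI := hprob; haveI := hreg
    rw [mem_absKernel_iff]
    intro x hx
    apply h
    apply subset_closure
    refine Set.mem_biUnion hp ?_
    rw [zeroSet_absKernel]
    exact hx

lemma sInter_subset_primitive_iff (A : Set (Set C(K,ℝ)))
    (hA : A ⊆ {p | IsPrimitive 𝒮 p}) (μ : Measure K)
    [IsProbabilityMeasure μ] [μ.Regular] :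
    ⋂₀ A ⊆ absKernel μ ↔ msupp μ ⊆ kerSet A := by
  constructor
  · intro h x hx
    by_contra hxk
    obtain ⟨g, hg0, hg1, -⟩ := exists_continuous_zero_one_of_isClosed
      (isClosed_closure (s := ⋃ p ∈ A, zeroSet p)) (isClosed_singleton (x := x))
      (by simpa [Set.disjoint_singleton_right, kerSet] using hxk)
    have hgA : g ∈ ⋂₀ A := by
      rw [sInter_eq_vanishing A hA]
      exact fun y hy => hg0 hy
    have := (mem_absKernel_iff μ g).mp (h hgA) x hx
    simp [hg1 rfl] at this
  · intro h f hf
    rw [mem_absKernel_iff]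
    intro x hx
    exact (sInter_eq_vanishing A hA ▸ hf) x (h hx)

end L4

section L6
variable {K : Type} [TopologicalSpace K] [CompactSpace K] [T2Space K]
  [MeasurableSpace K] [BorelSpace K] {𝒮 : Set (Module.End ℝ C(K, ℝ))}

lemma markov_abs_le {T : Module.End ℝ C(K,ℝ)} (hT : IsMarkov T) (f : C(K,ℝ)) (x : K) :
    |T f x| ≤ T |f| x := by
  have h1 : (0:C(K,ℝ)) ≤ T (|f| - f) := hT.1 _ (by
    rw [ContinuousMap.le_def]; intro y
    simp only [ContinuousMap.zero_apply, ContinuousMap.sub_apply, ContinuousMap.abs_apply]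
    have := le_abs_self (f y); linarith)
  have h2 : (0:C(K,ℝ)) ≤ T (|f| + f) := hT.1 _ (by
    rw [ContinuousMap.le_def]; intro y
    simp only [ContinuousMap.zero_apply, ContinuousMap.add_apply, ContinuousMap.abs_apply]
    have := neg_abs_le (f y); linarith)
  rw [map_sub] at h1
  rw [map_add] at h2
  rw [ContinuousMap.le_def] at h1 h2
  have h1x := h1 x
  have h2x := h2 x
  simp only [ContinuousMap.zero_apply, ContinuousMap.sub_apply, ContinuousMap.add_apply] at h1x h2x
  rw [abs_le]
  constructor <;> linarith

lemma kerSet_selfSupporting (A : Set (Set C(K,ℝ)))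
    (hA : A ⊆ {p | IsPrimitive 𝒮 p})
    (hMarkov : ∀ T ∈ 𝒮, IsMarkov T)
    {T : Module.End ℝ C(K,ℝ)} (hT : T ∈ 𝒮) (f : C(K,ℝ))
    (hf : ∀ y ∈ kerSet A, f y = 0) :
    ∀ x ∈ kerSet A, T f x = 0 := by
  have hsub : (⋃ p ∈ A, zeroSet p) ⊆ (T f) ⁻¹' {0} := by
    intro y hy
    simp only [Set.mem_iUnion] at hy
    obtain ⟨p, hp, hyp⟩ := hy
    obtain ⟨μ, ⟨⟨hprob, hreg, hinv⟩, _⟩, rfl⟩ := hA hp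
    haveI := hprob; haveI := hreg
    rw [zeroSet_absKernel] at hyp
    have hfker : (∫ x, |f x| ∂μ) = 0 := by
      rw [absint_eq_zero_iff]
      intro z hz
      exact hf z (subset_closure (Set.mem_biUnion hp (by rw [zeroSet_absKernel]; exact hz)))
    have hTabs : (∫ x, (T |f|) x ∂μ) = 0 := by
      rw [hinv T hT |f|]
      simpa only [ContinuousMap.abs_apply] using hfker
    have hTnonneg : (0 : C(K,ℝ)) ≤ T |f| := (hMarkov T hT).1 _ (by
      rw [ContinuousMap.le_def]; intro y
      simp only [ContinuousMap.zero_apply, ContinuousMap.abs_apply]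
      exact abs_nonneg _)
    rw [ContinuousMap.le_def] at hTnonneg
    have hTzero : ∀ z ∈ msupp μ, (T |f|) z = 0 := by
      rw [← absint_eq_zero_iff μ (T |f|)]
      rw [show (fun x => |(T |f|) x|) = fun x => (T |f|) x from
        funext fun x => abs_of_nonneg (by simpa using hTnonneg x)]
      exact hTabs
    have hle := markov_abs_le (hMarkov T hT) f y
    have hz := hTzero y hyp
    simp only [Set.mem_preimage, Set.mem_singleton_iff]
    exact abs_nonpos_iff.mp (hz ▸ hle)
  intro x hx
  have hcl : kerSet A ⊆ (T f) ⁻¹' {0} :=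
    closure_minimal hsub ((isClosed_singleton).preimage (map_continuous _))
  simpa using hcl hx

end L6
section L7
variable {K : Type} [TopologicalSpace K] [CompactSpace K] [T2Space K]
  [MeasurableSpace K] [BorelSpace K] {𝒮 : Set (Module.End ℝ C(K, ℝ))}

/-- restricted invariance on a self-supporting closed set -/
lemma restricted_invariance (ν : Measure K) [IsProbabilityMeasure ν] [ν.Regular]
    (hinv : IsInvariantM 𝒮 ν)
    (L : Set K) (hL : IsClosed L)
    (hss : ∀ T ∈ 𝒮, ∀ f : C(K,ℝ), (∀ y ∈ L, f y = 0) → ∀ x ∈ L, T f x = 0)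
    {T : Module.End ℝ C(K,ℝ)} (hT : T ∈ 𝒮) (hM : IsMarkov T) (f : C(K,ℝ)) :
    (∫ x in L, (T f) x ∂ν = ∫ x in L, f x ∂ν) ∧
    (∫ x in Lᶜ, (T f) x ∂ν = ∫ x in Lᶜ, f x ∂ν) := by
  have hLm : MeasurableSet L := hL.measurableSet
  -- A1 : the key inequality for 0 ≤ f ≤ 1
  have A1 : ∀ g : C(K,ℝ), (∀ x, 0 ≤ g x) → (∀ x, g x ≤ 1) →
      ∫ x in Lᶜ, g x ∂ν ≤ ∫ x in Lᶜ, (T g) x ∂ν := by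
    intro g hg0 hg1
    refine le_of_forall_pos_le_add ?_
    intro ε hε
    -- outer regularity: open U ⊇ L with ν (U \ L) ≤ ε
    obtain ⟨U, hLU, hUopen, hUlt⟩ :=
      Set.exists_isOpen_lt_add L (measure_ne_top ν L) (ε := ENNReal.ofReal ε)
        (by simp [hε, ne_of_gt])
    have hdiff : ν (U \ L) ≤ ENNReal.ofReal ε := by
      rw [measure_diff hLU hLm.nullMeasurableSet (measure_ne_top ν L)]
      exact tsub_le_iff_left.mpr hUlt.le
    -- Urysohn function: 0 on L, 1 on Uᶜ
    obtain ⟨u, hu0, hu1, hu01⟩ := exists_continuous_zero_one_of_isClosed hL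
      (isClosed_compl_iff.mpr hUopen)
      (by rw [Set.disjoint_compl_right_iff_subset]; exact hLU)
    set h : C(K,ℝ) := g * u with hh
    have hh0 : ∀ x, 0 ≤ h x := fun x =>
      mul_nonneg (hg0 x) (hu01 x).1
    have hhg : ∀ x, h x ≤ g x := fun x => by
      have : g x * u x ≤ g x * 1 := mul_le_mul_of_nonneg_left (hu01 x).2 (hg0 x)
      simpa [hh] using this
    have hhL : ∀ y ∈ L, h y = 0 := fun y hy => by
      simp [hh, show u y = 0 from hu0 hy]
    -- T h vanishes on L
    have hThL : ∀ x ∈ L, (T h) x = 0 := hss T hT h hhL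
    -- chain of inequalities
    have int1 : ∫ x in Lᶜ, (T h) x ∂ν ≤ ∫ x in Lᶜ, (T g) x ∂ν := by
      refine setIntegral_mono_on ((cont_integrable ν (T h)).integrableOn)
        ((cont_integrable ν (T g)).integrableOn) hLm.compl ?_
      intro x _
      have : (0:C(K,ℝ)) ≤ T (g - h) := hM.1 _ (by
        rw [ContinuousMap.le_def]; intro y
        simp only [ContinuousMap.zero_apply, ContinuousMap.sub_apply, sub_nonneg]
        exact hhg y)
      rw [map_sub, ContinuousMap.le_def] at this
      have := this x
      simp only [ContinuousMap.zero_apply, ContinuousMap.sub_apply, sub_nonneg] at this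
      exact this
    have int2 : ∫ x in Lᶜ, (T h) x ∂ν = ∫ x, (T h) x ∂ν := by
      rw [← integral_add_compl hLm (cont_integrable ν (T h))]
      rw [setIntegral_eq_zero_of_forall_eq_zero hThL, zero_add]
    have int3 : (∫ x, (T h) x ∂ν) = ∫ x, h x ∂ν := hinv T hT h
    have int4 : ∫ x in Uᶜ, h x ∂ν ≤ ∫ x, h x ∂ν := by
      refine setIntegral_le_integral (cont_integrable ν h) ?_
      exact Filter.Eventually.of_forall (fun x => hh0 x)
    have int5 : ∫ x in Uᶜ, h x ∂ν = ∫ x in Uᶜ, g x ∂ν := by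
      refine setIntegral_congr_fun hUopen.measurableSet.compl ?_
      intro x hx
      simp [hh, show u x = 1 from hu1 hx]
    -- ∫_{Lᶜ} g ≤ ∫_{Uᶜ} g + ε
    have hsets : (Lᶜ : Set K) = Uᶜ ∪ (U \ L) := by
      ext x
      simp only [Set.mem_compl_iff, Set.mem_union, Set.mem_diff]
      constructor
      · intro hx
        by_cases hxU : x ∈ U
        · exact Or.inr ⟨hxU, hx⟩
        · exact Or.inl hxU
      · rintro (hx | ⟨-, hx⟩)
        · exact fun hxL => hx (hLU hxL)
        · exact hx
    have hdisj : Disjoint (Uᶜ : Set K) (U \ L) := by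
      rw [Set.disjoint_left]
      rintro x hx ⟨hxU, -⟩
      exact hx hxU
    have hsplit : ∫ x in Lᶜ, g x ∂ν = (∫ x in Uᶜ, g x ∂ν) + ∫ x in U \ L, g x ∂ν := by
      rw [hsets, setIntegral_union hdisj (hUopen.measurableSet.diff hLm)
        ((cont_integrable ν g).integrableOn) ((cont_integrable ν g).integrableOn)]
    have int6 : ∫ x in U \ L, g x ∂ν ≤ ε := by
      have h1 : ∫ x in U \ L, g x ∂ν ≤ ∫ x in U \ L, (1:ℝ) ∂ν := by
        refine setIntegral_mono_on ((cont_integrable ν g).integrableOn)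
          (integrableOn_const (measure_ne_top ν _)) (hUopen.measurableSet.diff hLm)
          (fun x _ => hg1 x)
      have h2 : ∫ x in U \ L, (1:ℝ) ∂ν = (ν (U \ L)).toReal := by
        simp [setIntegral_const, measureReal_def]
      have h3 : (ν (U \ L)).toReal ≤ ε := by
        calc (ν (U \ L)).toReal ≤ (ENNReal.ofReal ε).toReal :=
              ENNReal.toReal_mono ENNReal.ofReal_ne_top hdiff
          _ = ε := ENNReal.toReal_ofReal hε.le
      linarith
    calc ∫ x in Lᶜ, g x ∂ν = (∫ x in Uᶜ, g x ∂ν) + ∫ x in U \ L, g x ∂ν := hsplit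
      _ ≤ (∫ x, h x ∂ν) + ε := add_le_add (int5 ▸ int4) int6
      _ = (∫ x in Lᶜ, (T h) x ∂ν) + ε := by rw [int2, int3]
      _ ≤ (∫ x in Lᶜ, (T g) x ∂ν) + ε := add_le_add_left int1 _
  -- A2 : equality on Lᶜ for 0 ≤ g ≤ 1
  have A2 : ∀ g : C(K,ℝ), (∀ x, 0 ≤ g x) → (∀ x, g x ≤ 1) →
      ∫ x in Lᶜ, (T g) x ∂ν = ∫ x in Lᶜ, g x ∂ν := by
    intro g hg0 hg1
    have hfo := A1 g hg0 hg1
    have hg' : ∀ x, 0 ≤ (1 - g : C(K,ℝ)) x := fun x => by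
      simp only [ContinuousMap.sub_apply, ContinuousMap.one_apply, sub_nonneg]; exact hg1 x
    have hg'' : ∀ x, (1 - g : C(K,ℝ)) x ≤ 1 := fun x => by
      simp only [ContinuousMap.sub_apply, ContinuousMap.one_apply]
      have := hg0 x; linarith
    have hba := A1 (1 - g) hg' hg''
    have hT1 : T (1 - g) = 1 - T g := by rw [map_sub, hM.2]
    rw [hT1] at hba
    have e1 : ∫ x in Lᶜ, ((1 : C(K,ℝ)) - T g) x ∂ν
        = (∫ x in Lᶜ, (1:ℝ) ∂ν) - ∫ x in Lᶜ, (T g) x ∂ν := by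
      rw [← integral_sub (integrableOn_const (C := (1:ℝ)) (measure_ne_top _ _))
        ((cont_integrable ν (T g)).integrableOn)]
      congr 1
    have e2 : ∫ x in Lᶜ, ((1 : C(K,ℝ)) - g) x ∂ν
        = (∫ x in Lᶜ, (1:ℝ) ∂ν) - ∫ x in Lᶜ, g x ∂ν := by
      rw [← integral_sub (integrableOn_const (C := (1:ℝ)) (measure_ne_top _ _))
        ((cont_integrable ν g).integrableOn)]
      congr 1
    rw [e2, e1] at hba
    linarith
  -- A3 : equality on Lᶜ for all f, by affine renormalisation
  have A3 : ∀ g : C(K,ℝ), ∫ x in Lᶜ, (T g) x ∂ν = ∫ x in Lᶜ, g x ∂ν := by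
    intro g
    set M : ℝ := ‖g‖ + 1 with hM'
    have hMpos : 0 < M := by positivity
    set g' : C(K,ℝ) := (2*M)⁻¹ • (g + M • (1:C(K,ℝ))) with hg'
    have hb : ∀ x, |g x| ≤ ‖g‖ := fun x => by
      exact ContinuousMap.norm_coe_le_norm g x
    have hg'0 : ∀ x, 0 ≤ g' x := fun x => by
      have := (abs_le.mp (hb x)).1
      simp only [hg', ContinuousMap.smul_apply, ContinuousMap.add_apply,
        ContinuousMap.one_apply, smul_eq_mul]
      have h2M : (0:ℝ) < 2*M := by linarith
      apply mul_nonneg (inv_nonneg.mpr h2M.le)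
      simp only [hM']; linarith
    have hg'1 : ∀ x, g' x ≤ 1 := fun x => by
      have := (abs_le.mp (hb x)).2
      simp only [hg', ContinuousMap.smul_apply, ContinuousMap.add_apply,
        ContinuousMap.one_apply, smul_eq_mul]
      have h2M : (0:ℝ) < 2*M := by linarith
      rw [inv_mul_le_iff₀ h2M]
      simp only [hM']; linarith
    have key := A2 g' hg'0 hg'1
    have hrepr : g = (2*M) • g' - M • (1:C(K,ℝ)) := by
      rw [hg', smul_smul, mul_inv_cancel₀ (by linarith : (2*M:ℝ) ≠ 0), one_smul]
      abel
    have hTg : T g = (2*M) • T g' - M • (1:C(K,ℝ)) := by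
      conv_lhs => rw [hrepr]
      simp only [map_sub, LinearMap.map_smul, hM.2]
    have expand : ∀ (a : C(K,ℝ)),
        ∫ x in Lᶜ, ((2*M) • a - M • (1:C(K,ℝ))) x ∂ν
          = (2*M) * (∫ x in Lᶜ, a x ∂ν) - M * (ν Lᶜ).toReal := by
      intro a
      have : (fun x => ((2*M) • a - M • (1:C(K,ℝ))) x)
          = fun x => (2*M) * a x - M * 1 := by
        funext x; simp [smul_eq_mul]
      rw [this, integral_sub (((cont_integrable ν a).integrableOn).const_mul _)
        ((integrableOn_const (C := (1:ℝ)) (measure_ne_top _ _)).const_mul _),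
        integral_const_mul, integral_const_mul]
      simp [setIntegral_const, measureReal_def]
    calc ∫ x in Lᶜ, (T g) x ∂ν
        = ∫ x in Lᶜ, ((2*M) • T g' - M • (1:C(K,ℝ))) x ∂ν := by rw [hTg]
      _ = (2*M) * (∫ x in Lᶜ, (T g') x ∂ν) - M * (ν Lᶜ).toReal := expand _
      _ = (2*M) * (∫ x in Lᶜ, g' x ∂ν) - M * (ν Lᶜ).toReal := by rw [key]
      _ = ∫ x in Lᶜ, ((2*M) • g' - M • (1:C(K,ℝ))) x ∂ν := (expand _).symm
      _ = ∫ x in Lᶜ, g x ∂ν := by rw [← hrepr]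
  -- equality on L by subtraction from global invariance
  have A4 : ∫ x in L, (T f) x ∂ν = ∫ x in L, f x ∂ν := by
    have h1 := integral_add_compl hLm (cont_integrable ν (T f))
    have h2 := integral_add_compl hLm (cont_integrable ν f)
    have h3 := hinv T hT f
    have h4 := A3 f
    linarith
  exact ⟨A4, A3 f⟩

end L7
section L8
variable {K : Type} [TopologicalSpace K] [CompactSpace K] [T2Space K]
  [MeasurableSpace K] [BorelSpace K] {𝒮 : Set (Module.End ℝ C(K, ℝ))}

lemma ergodic_zero_one (hMarkov : ∀ T ∈ 𝒮, IsMarkov T)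
    (ν : Measure K) (hErg : IsErgodicM 𝒮 ν)
    (L : Set K) (hL : IsClosed L)
    (hss : ∀ T ∈ 𝒮, ∀ f : C(K,ℝ), (∀ y ∈ L, f y = 0) → ∀ x ∈ L, T f x = 0)
    (hpos : ν L ≠ 0) : ν L = 1 := by
  obtain ⟨⟨hprob, hreg, hinv⟩, hext⟩ := hErg
  haveI := hprob; haveI := hreg
  have hLm : MeasurableSet L := hL.measurableSet
  by_contra hne
  have hle : ν L ≤ 1 := prob_le_one
  have hlt : ν L < 1 := lt_of_le_of_ne hle hne
  have hfin : ν L ≠ ∞ := (lt_of_lt_of_le hlt le_top).ne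
  set tn : ℝ≥0 := (ν L).toNNReal with htn
  have hcoe : (tn : ℝ≥0∞) = ν L := ENNReal.coe_toNNReal hfin
  have htn0 : tn ≠ 0 := by
    simp only [htn, ne_eq, ENNReal.toNNReal_eq_zero_iff]
    push_neg
    exact ⟨hpos, hfin⟩
  have htn1 : tn < 1 := by
    rw [← ENNReal.coe_lt_one_iff, hcoe]; exact hlt
  have htn1' : (1 : ℝ≥0) - tn ≠ 0 := by
    have := tsub_pos_of_lt htn1
    exact this.ne'
  have hcompl : ν Lᶜ = 1 - (tn : ℝ≥0∞) := by
    rw [measure_compl hLm (measure_ne_top ν L), measure_univ, hcoe]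
  have hcompl' : ν Lᶜ = ((1 - tn : ℝ≥0) : ℝ≥0∞) := by
    rw [hcompl, ENNReal.coe_sub, ENNReal.coe_one]
  set μ₁ : Measure K := tn⁻¹ • ν.restrict L with hμ₁
  set μ₂ : Measure K := (1 - tn)⁻¹ • ν.restrict Lᶜ with hμ₂
  haveI hμ₁p : IsProbabilityMeasure μ₁ := by
    constructor
    rw [hμ₁, Measure.smul_apply, Measure.restrict_apply_univ, ENNReal.smul_def, smul_eq_mul, ← hcoe,
      ← ENNReal.coe_mul, inv_mul_cancel₀ htn0, ENNReal.coe_one]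
  haveI hμ₂p : IsProbabilityMeasure μ₂ := by
    constructor
    rw [hμ₂, Measure.smul_apply, Measure.restrict_apply_univ, ENNReal.smul_def, smul_eq_mul, hcompl',
      ← ENNReal.coe_mul, inv_mul_cancel₀ htn1', ENNReal.coe_one]
  haveI : (ν.restrict L).Regular := Measure.Regular.restrict_of_measure_ne_top (measure_ne_top ν L)
  haveI : (ν.restrict Lᶜ).Regular :=
    Measure.Regular.restrict_of_measure_ne_top (measure_ne_top ν Lᶜ)
  haveI hμ₁r : μ₁.Regular := Measure.Regular.smul_nnreal _
  haveI hμ₂r : μ₂.Regular := Measure.Regular.smul_nnreal _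
  have hinv₁ : IsInvariantM 𝒮 μ₁ := by
    intro T hT f
    have := (restricted_invariance ν hinv L hL hss hT (hMarkov T hT) f).1
    rw [hμ₁]
    rw [show (tn⁻¹ • ν.restrict L : Measure K) = ((tn⁻¹ : ℝ≥0) : ℝ≥0∞) • ν.restrict L from rfl]
    rw [integral_smul_measure, integral_smul_measure, this]
  have hinv₂ : IsInvariantM 𝒮 μ₂ := by
    intro T hT f
    have := (restricted_invariance ν hinv L hL hss hT (hMarkov T hT) f).2
    rw [hμ₂]
    rw [show ((1-tn)⁻¹ • ν.restrict Lᶜ : Measure K)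
      = (((1-tn)⁻¹ : ℝ≥0) : ℝ≥0∞) • ν.restrict Lᶜ from rfl]
    rw [integral_smul_measure, integral_smul_measure, this]
  have hdecomp : ν = tn • μ₁ + (1 - tn) • μ₂ := by
    rw [hμ₁, hμ₂, smul_smul, smul_smul, mul_inv_cancel₀ htn0, mul_inv_cancel₀ htn1',
      one_smul, one_smul, Measure.restrict_add_restrict_compl hLm]
  have heq := hext μ₁ μ₂ ⟨hμ₁p, hμ₁r, hinv₁⟩ ⟨hμ₂p, hμ₂r, hinv₂⟩ tn
    (zero_lt_iff.mpr htn0) htn1 hdecomp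
  have h1 : μ₁ L = 1 := by
    rw [hμ₁, Measure.smul_apply, Measure.restrict_apply hLm, Set.inter_self, ENNReal.smul_def, smul_eq_mul,
      ← hcoe, ← ENNReal.coe_mul, inv_mul_cancel₀ htn0, ENNReal.coe_one]
  have h2 : μ₂ L = 0 := by
    rw [hμ₂, Measure.smul_apply, Measure.restrict_apply hLm]
    simp
  rw [heq, h2] at h1
  exact one_ne_zero h1.symm

end L8



section Helpers
variable {K : Type} [TopologicalSpace K] [CompactSpace K] [T2Space K]
  [MeasurableSpace K] [BorelSpace K] {𝒮 : Set (Module.End ℝ C(K, ℝ))}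

lemma msupp_measure_one (ν : Measure K) [IsProbabilityMeasure ν] [ν.Regular] :
    ν (msupp ν) = 1 := by
  have h := measure_add_measure_compl (μ := ν) (isClosed_msupp ν).measurableSet
  rw [msupp_compl_null ν, add_zero, measure_univ] at h
  exact h

lemma msupp_subset_of_closed_one (ν : Measure K) [IsProbabilityMeasure ν]
    {S : Set K} (hS : IsClosed S) (h1 : ν S = 1) : msupp ν ⊆ S := by
  intro x hx
  by_contra hxS
  have hpos := hx Sᶜ hS.isOpen_compl hxS
  rw [prob_compl_eq_zero_iff hS.measurableSet |>.mpr h1] at hpos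
  exact lt_irrefl _ hpos

lemma one_not_mem_absKernel (μ : Measure K) [IsProbabilityMeasure μ] :
    (1 : C(K,ℝ)) ∉ absKernel μ := by
  intro h
  have : ∫ x, |(1:C(K,ℝ)) x| ∂μ = 1 := by
    simp only [ContinuousMap.one_apply, abs_one, integral_const, measure_univ,
      ENNReal.toReal_one, smul_eq_mul, one_mul, probReal_univ]
  rw [absKernel, Set.mem_setOf_eq, this] at h
  exact one_ne_zero h

end Helpers

/-- `A ↦ hull (ker A)` is a Kuratowski closure operator on subsets of `Prim(𝒮)`;
in particular `hull (ker (A ∪ B)) = hull (ker A) ∪ hull (ker B)`. -/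
theorem stmt17 {K : Type} [TopologicalSpace K] [CompactSpace K] [T2Space K]
    [MeasurableSpace K] [BorelSpace K]
    (𝒮 : Subsemigroup (Module.End ℝ C(K, ℝ))) (hMarkov : ∀ T ∈ 𝒮, IsMarkov T)
    (ham : RightAmenable 𝒮) :
    (hullOf (𝒮 : Set (Module.End ℝ C(K, ℝ))) (⋂₀ (∅ : Set (Set C(K, ℝ)))) = ∅) ∧
    (∀ A : Set (Set C(K, ℝ)),
      A ⊆ {p | IsPrimitive (𝒮 : Set (Module.End ℝ C(K, ℝ))) p} →
      A ⊆ hullOf (𝒮 : Set (Module.End ℝ C(K, ℝ))) (⋂₀ A)) ∧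
    (∀ A : Set (Set C(K, ℝ)),
      A ⊆ {p | IsPrimitive (𝒮 : Set (Module.End ℝ C(K, ℝ))) p} →
      hullOf (𝒮 : Set (Module.End ℝ C(K, ℝ)))
          (⋂₀ hullOf (𝒮 : Set (Module.End ℝ C(K, ℝ))) (⋂₀ A)) =
        hullOf (𝒮 : Set (Module.End ℝ C(K, ℝ))) (⋂₀ A)) ∧
    (∀ A B : Set (Set C(K, ℝ)),
      A ⊆ {p | IsPrimitive (𝒮 : Set (Module.End ℝ C(K, ℝ))) p} →
      B ⊆ {p | IsPrimitive (𝒮 : Set (Module.End ℝ C(K, ℝ))) p} →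
      hullOf (𝒮 : Set (Module.End ℝ C(K, ℝ))) (⋂₀ (A ∪ B)) =
        hullOf (𝒮 : Set (Module.End ℝ C(K, ℝ))) (⋂₀ A) ∪
          hullOf (𝒮 : Set (Module.End ℝ C(K, ℝ))) (⋂₀ B)) := by
    classical
  have hM : ∀ T ∈ (𝒮 : Set (Module.End ℝ C(K, ℝ))), IsMarkov T := hMarkov
  refine ⟨?_, ?_, ?_, ?_⟩
  · -- hull of ker ∅ is empty
    ext p
    simp only [hullOf, Set.sInter_empty, Set.mem_setOf_eq, Set.mem_empty_iff_false,
      iff_false, not_and]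
    intro hprim hsub
    obtain ⟨μ, ⟨⟨hprob, hreg, hinv⟩, -⟩, rfl⟩ := hprim
    haveI := hprob
    exact one_not_mem_absKernel μ (hsub (Set.mem_univ _))
  · -- A ⊆ hull (ker A)
    intro A hA p hp
    exact ⟨hA hp, Set.sInter_subset_of_mem hp⟩
  · -- idempotence
    intro A hA
    ext q
    simp only [hullOf, Set.mem_setOf_eq]
    constructor
    · rintro ⟨hq, hsub⟩
      refine ⟨hq, fun f hf => hsub ?_⟩
      exact Set.mem_sInter.mpr fun r hr => hr.2 hf
    · rintro ⟨hq, hsub⟩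
      exact ⟨hq, Set.sInter_subset_of_mem (show q ∈ {p | IsPrimitive _ p ∧ _ ⊆ p} from ⟨hq, hsub⟩)⟩
  · -- additivity
    intro A B hA hB
    have hAB : A ∪ B ⊆ {p | IsPrimitive (𝒮 : Set (Module.End ℝ C(K, ℝ))) p} :=
      Set.union_subset hA hB
    ext q
    simp only [hullOf, Set.mem_setOf_eq, Set.mem_union]
    constructor
    · rintro ⟨hq, hsub⟩
      have hqp := hq
      obtain ⟨μ, hErg, rfl⟩ := hq
      have hErg' := hErg
      obtain ⟨⟨hprob, hreg, hinv⟩, -⟩ := hErg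
      haveI := hprob; haveI := hreg
      have hm : msupp μ ⊆ kerSet (A ∪ B) :=
        (sInter_subset_primitive_iff (A ∪ B) hAB μ).mp hsub
      have hker : kerSet (A ∪ B) = kerSet A ∪ kerSet B := by
        unfold kerSet
        rw [Set.biUnion_union, closure_union]
      have hone : μ (msupp μ) = 1 := msupp_measure_one μ
      have hcover : μ (kerSet A ∪ kerSet B) = 1 := by
        refine le_antisymm prob_le_one ?_
        calc (1:ℝ≥0∞) = μ (msupp μ) := hone.symm
          _ ≤ μ (kerSet A ∪ kerSet B) := measure_mono (hker ▸ hm)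
      have hcase : μ (kerSet A) ≠ 0 ∨ μ (kerSet B) ≠ 0 := by
        by_contra h
        push_neg at h
        have hle := measure_union_le (μ := μ) (kerSet A) (kerSet B)
        rw [hcover, h.1, h.2] at hle
        simp at hle
      rcases hcase with h | h
      · left
        refine ⟨hqp, (sInter_subset_primitive_iff A hA μ).mpr ?_⟩
        have h1 : μ (kerSet A) = 1 :=
          ergodic_zero_one hM μ hErg' (kerSet A) isClosed_closure
            (fun T hT f hf => kerSet_selfSupporting A hA hM hT f hf) h
        exact msupp_subset_of_closed_one μ isClosed_closure h1
      · right
        refine ⟨hqp, (sInter_subset_primitive_iff B hB μ).mpr ?_⟩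
        have h1 : μ (kerSet B) = 1 :=
          ergodic_zero_one hM μ hErg' (kerSet B) isClosed_closure
            (fun T hT f hf => kerSet_selfSupporting B hB hM hT f hf) h
        exact msupp_subset_of_closed_one μ isClosed_closure h1
    · rintro (⟨hq, hsub⟩ | ⟨hq, hsub⟩)
      · exact ⟨hq, subset_trans (by rw [Set.sInter_union]; exact Set.inter_subset_left) hsub⟩
      · exact ⟨hq, subset_trans (by rw [Set.sInter_union]; exact Set.inter_subset_right) hsub⟩
end
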